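/- arXiv:2106.10742 — 7 statements merged into one kernel-verified Lean document; each statement's English description precedes it below -/
import Mathlib

section
/- Let M and N be chain complexes of R-modules such that N_n lies in the subprojectivity domain of M_n (as modules) for every integer n, and suppose N lies in the subprojectivity domain of M in the category of complexes. Then for every short exact sequence of complexes 0 → K → P → N → 0 with P a projective complex, every chain map M[-1] → K is null-homotopic, i.e., Hom_{K(R)}(M[-1], K) = 0. -/
open CategoryTheory CategoryTheory.Limits

universe u

/-- `N` belongs to the subprojectivity domain of `M`: every morphism `M ⟶ N` factors
through a projective object. -/
def SubprojDomain {A : Type*} [Category A] (M N : A) : Prop :=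
  ∀ f : M ⟶ N, ∃ (P : A) (_ : Projective P) (a : M ⟶ P) (b : P ⟶ N), a ≫ b = f

/-- The shift `M[-1]` of a chain complex: `M[-1]ᵢ = M_{i+1}` with differential `-d`. -/
def shiftNegOne {R : Type u} [Ring R] (M : ChainComplex (ModuleCat.{u} R) ℤ) :
    ChainComplex (ModuleCat.{u} R) ℤ where
  X i := M.X (i + 1)
  d i j := -(M.d (i + 1) (j + 1))
  shape i j h := by
    have : ¬ (ComplexShape.down ℤ).Rel (i + 1) (j + 1) := by
      simp only [ComplexShape.down_Rel] at h ⊢; omega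
    rw [M.shape _ _ this, neg_zero]
  d_comp_d' i j k _ _ := by simp

open HomologicalComplex

noncomputable section

variable {V : Type*} [Category V] [Abelian V]

/-- A contractible complex covering `P`. -/
def coverCx (P : ChainComplex V ℤ) : ChainComplex V ℤ where
  X n := P.X n ⊞ P.X (n + 1)
  d i j := if h : j + 1 = i then
      biprod.fst ≫ (P.XIsoOfEq (show i = j + 1 from h.symm)).hom ≫ biprod.inr else 0
  shape i j h := by
    rw [dif_neg]
    simpa using h
  d_comp_d' i j k hij hjk := by
    rw [dif_pos (by simpa using hij), dif_pos (by simpa using hjk)]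
    simp

/-- The canonical epimorphism `coverCx P ⟶ P`. -/
def coverπ (P : ChainComplex V ℤ) : coverCx P ⟶ P where
  f n := biprod.fst + biprod.snd ≫ P.d (n + 1) n
  comm' i j hij := by
    obtain rfl : j + 1 = i := by simpa using hij
    dsimp [coverCx]
    simp

instance (P : ChainComplex V ℤ) : Epi (coverπ P) := by
  apply epi_of_epi_f
  intro i
  haveI : IsSplitEpi ((coverπ P).f i) := ⟨⟨⟨biprod.inl, by
    show biprod.inl ≫ (biprod.fst + biprod.snd ≫ P.d (i + 1) i : P.X i ⊞ P.X (i + 1) ⟶ P.X i) = 𝟙 _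
    simp⟩⟩⟩
  infer_instance

/-- The contracting homotopy of `coverCx P`. -/
def coverHomotopy (P : ChainComplex V ℤ) : Homotopy (𝟙 (coverCx P)) 0 where
  hom i j := if h : j = i + 1 then
      biprod.snd ≫ (P.XIsoOfEq h.symm).hom ≫ biprod.inl else 0
  zero i j hn := by
    rw [dif_neg]
    intro h
    exact hn (by simpa using h.symm)
  comm n := by
    rw [dNext_eq _ (show (ComplexShape.down ℤ).Rel n (n-1) by simp),
      prevD_eq _ (show (ComplexShape.down ℤ).Rel (n+1) n by simp)]
    dsimp [coverCx]
    erw [dif_pos (show n = n - 1 + 1 by omega)]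
    simp [XIsoOfEq_hom_comp_XIsoOfEq_hom]
    erw [add_zero, biprod.total]

/-- A projective chain complex is contractible. -/
def contractOfProjective (P : ChainComplex V ℤ) [Projective P] : Homotopy (𝟙 P) 0 := by
  have h1 : Projective.factorThru (𝟙 P) (coverπ P) ≫ coverπ P = 𝟙 P :=
    Projective.factorThru_comp _ _
  exact (Homotopy.ofEq (by rw [← h1]; simp)).trans
    ((((coverHomotopy P).compRight (coverπ P)).compLeft
      (Projective.factorThru (𝟙 P) (coverπ P))).trans (Homotopy.ofEq (by simp)))

end

/-- if `N_n` is in the subprojectivity domain of `M_n` for all `n`, and `N` is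
in the subprojectivity domain of `M` as complexes, then for every short exact sequence
`0 → K → P → N → 0` with `P` projective, every chain map `M[-1] → K` is null-homotopic. -/
theorem homotopy_of_subprojDomain
    {R : Type u} [Ring R] (M N : ChainComplex (ModuleCat.{u} R) ℤ)
    (hcomp : ∀ n : ℤ, SubprojDomain (M.X n) (N.X n))
    (hMN : SubprojDomain M N)
    (P : ChainComplex (ModuleCat.{u} R) ℤ) (p : P ⟶ N) (hP : Projective P) (hp : Epi p)
    (g : shiftNegOne M ⟶ kernel p) :
    Nonempty (Homotopy g 0) := by
  classical
  haveI := hP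
  haveI := hp
  set ι := kernel.ι p with hιdef
  -- cast helper lemmas
  have e0 : ∀ (x : ℤ) (h : x = x) {Z : ModuleCat.{u} R} (f : M.X x ⟶ Z),
      (M.XIsoOfEq h).hom ≫ f = f := by
    intro x h Z f
    simp [XIsoOfEq]
  have ee' : ∀ {x y : ℤ} (h1 : x = y) (h2 : y = x) {Z : ModuleCat.{u} R} (f : M.X x ⟶ Z),
      (M.XIsoOfEq h1).hom ≫ (M.XIsoOfEq h2).hom ≫ f = f := by
    intro x y h1 h2 Z f
    subst h1
    simp [XIsoOfEq]
  have dd : ∀ (x y z : ℤ) (h : y = z) {Z : ModuleCat.{u} R} (f : M.X z ⟶ Z),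
      M.d x y ≫ (M.XIsoOfEq h).hom ≫ f = M.d x z ≫ f := by
    intro x y z h Z f
    subst h
    simp [XIsoOfEq]
  -- the composition with `ι` is null-homotopic since `P` is contractible
  have h1 : Homotopy (g ≫ ι) 0 :=
    (Homotopy.ofEq (Category.comp_id _).symm).trans
      (((contractOfProjective P).compLeft (g ≫ ι)).trans (Homotopy.ofEq (by simp)))
  set s := h1.hom with hsdef
  have hdshift : ∀ i j : ℤ, (shiftNegOne M).d i j = -(M.d (i+1) (j+1)) := fun _ _ => rfl
  have hszero : ∀ i j : ℤ, ¬ (i + 1 = j) → s i j = 0 := fun i j h =>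
    h1.zero i j (by simpa using h)
  have scast : ∀ (i i' j : ℤ) (h : i = i'),
      s i j = (M.XIsoOfEq (show i + 1 = i' + 1 by rw [h])).hom ≫ s i' j := by
    intro i i' j h
    subst h
    exact (e0 _ _ _).symm
  have hcommn : ∀ n : ℤ, (g ≫ ι).f n =
      (shiftNegOne M).d n (n-1) ≫ s (n-1) n + s n (n+1) ≫ P.d (n+1) n := by
    intro n
    have h2 := h1.comm n
    rw [dNext_eq _ (show (ComplexShape.down ℤ).Rel n (n-1) by simp),
        prevD_eq _ (show (ComplexShape.down ℤ).Rel (n+1) n by simp)] at h2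
    simpa using h2
  have hps : ∀ n : ℤ, (shiftNegOne M).d n (n-1) ≫ s (n-1) n ≫ p.f n
      + s n (n+1) ≫ p.f (n+1) ≫ N.d (n+1) n = 0 := by
    intro n
    have h0 : (g ≫ ι).f n ≫ p.f n = 0 := by
      have h3 : g ≫ ι ≫ p = 0 := by rw [hιdef, kernel.condition, comp_zero]
      have h4 := congr_hom h3 n
      simp only [comp_f, zero_f, Category.assoc] at h4 ⊢
      exact h4
    have h5 : ((shiftNegOne M).d n (n-1) ≫ s (n-1) n + s n (n+1) ≫ P.d (n+1) n) ≫ p.f n = 0 := by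
      rw [← hcommn n]; exact h0
    rw [Preadditive.add_comp, Category.assoc, Category.assoc, ← p.comm (n+1) n] at h5
    exact h5
  -- the chain map `u : M ⟶ N`
  let u : M ⟶ N :=
    { f := fun m => (M.XIsoOfEq (show m = m - 1 + 1 by omega)).hom ≫ s (m-1) m ≫ p.f m
      comm' := by
        intro a' b' hab
        obtain rfl : b' + 1 = a' := by simpa using hab
        rw [scast (b'+1-1) b' (b'+1) (by omega)]
        simp only [Category.assoc]
        erw [Category.assoc, ee']
        have h7 := hps b'
        erw [hdshift, Preadditive.neg_comp] at h7
        erw [show s b' (b'+1) ≫ p.f (b'+1) ≫ N.d (b'+1) b'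
            = M.d (b'+1) (b'-1+1) ≫ s (b'-1) b' ≫ p.f b' from (neg_add_eq_zero.mp h7).symm]
        rw [dd] }
  have hu : ∀ m : ℤ, u.f m
      = (M.XIsoOfEq (show m = m - 1 + 1 by omega)).hom ≫ s (m-1) m ≫ p.f m := fun _ => rfl
  obtain ⟨Q, hQ, a, b, hab⟩ := hMN u
  haveI := hQ
  set v : M ⟶ P := a ≫ Projective.factorThru b p with hvdef
  have hvp : v ≫ p = u := by
    rw [hvdef, Category.assoc, Projective.factorThru_comp, hab]
  -- the correction term and the corrected degree-wise maps
  let w : ∀ i j : ℤ, (shiftNegOne M).X i ⟶ P.X j := fun i j =>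
    if h : j = i + 1 then (M.XIsoOfEq (show i + 1 = j from h.symm)).hom ≫ v.f j else 0
  have hw : ∀ (i j : ℤ) (h : j = i + 1),
      w i j = (M.XIsoOfEq (show i + 1 = j from h.symm)).hom ≫ v.f j := fun i j h => dif_pos h
  have hw0 : ∀ (i j : ℤ), ¬ (j = i + 1) → w i j = 0 := fun i j h => dif_neg h
  let q : ∀ i j : ℤ, (shiftNegOne M).X i ⟶ P.X j := fun i j => s i j - w i j
  have hqeq : ∀ i j : ℤ, q i j = s i j - w i j := fun _ _ => rfl
  have hq : ∀ i j : ℤ, q i j ≫ p.f j = 0 := by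
    intro i j
    by_cases h : j = i + 1
    · subst h
      erw [hqeq, hw i (i+1) rfl, Preadditive.sub_comp, Category.assoc]
      have h8 := congr_hom hvp (i+1)
      rw [comp_f] at h8
      rw [h8, hu (i+1), scast (i+1-1) i (i+1) (by omega)]
      erw [Category.assoc]
      erw [e0, ee', sub_self]
    · rw [hqeq, hw0 i j h, sub_zero, hszero i j (fun hh => h hh.symm), zero_comp]
  -- kernel components
  let e : ∀ j : ℤ, (kernel p).X j ≅ kernel (p.f j) := fun j =>
    PreservesKernel.iso (HomologicalComplex.eval (ModuleCat.{u} R) (ComplexShape.down ℤ) j) p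
  have he : ∀ j : ℤ, (e j).inv ≫ ι.f j = kernel.ι (p.f j) := by
    intro j
    rw [Iso.inv_comp_eq]
    show ι.f j = (PreservesKernel.iso (HomologicalComplex.eval (ModuleCat.{u} R)
      (ComplexShape.down ℤ) j) p).hom ≫ kernel.ι (p.f j)
    rw [PreservesKernel.iso_hom]
    exact (kernelComparison_comp_ι p (HomologicalComplex.eval (ModuleCat.{u} R)
      (ComplexShape.down ℤ) j)).symm
  have hmonoι : ∀ j : ℤ, Mono (ι.f j) := by
    intro j
    have h9 : ι.f j = (e j).hom ≫ kernel.ι (p.f j) := by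
      rw [← he j, ← Category.assoc, Iso.hom_inv_id, Category.id_comp]
    rw [h9]
    exact mono_comp _ _
  -- key identity for the correction term
  have hqd : ∀ n : ℤ, (shiftNegOne M).d n (n-1) ≫ q (n-1) n + q n (n+1) ≫ P.d (n+1) n
      = (g ≫ ι).f n := by
    intro n
    have hw1 : (shiftNegOne M).d n (n-1) ≫ w (n-1) n = -(M.d (n+1) n ≫ v.f n) := by
      erw [hw (n-1) n (by omega), hdshift, Preadditive.neg_comp, dd]; rfl
    have hw2 : w n (n+1) ≫ P.d (n+1) n = M.d (n+1) n ≫ v.f n := by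
      erw [hw n (n+1) rfl, Category.assoc, e0, v.comm (n+1) n]
    erw [hqeq, hqeq, Preadditive.comp_sub, Preadditive.sub_comp, hw1, hw2, hcommn n]
    erw [sub_neg_eq_add]
    erw [add_assoc, add_comm (show (shiftNegOne M).X n ⟶ P.X n from M.d (n+1) n ≫ v.f n)
      (s n (n+1) ≫ P.d (n+1) n - (show (shiftNegOne M).X n ⟶ P.X n from M.d (n+1) n ≫ v.f n)),
      sub_add_cancel]
  -- build the homotopy
  have hl : ∀ i j : ℤ,
      kernel.lift (p.f j) (q i j) (hq i j) ≫ (e j).inv ≫ ι.f j = q i j := by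
    intro i j
    rw [he j, kernel.lift_ι]
  have hl' : ∀ (i j : ℤ) {Z : ModuleCat.{u} R} (z : P.X j ⟶ Z),
      kernel.lift (p.f j) (q i j) (hq i j) ≫ (e j).inv ≫ ι.f j ≫ z = q i j ≫ z := by
    intro i j Z z
    rw [← Category.assoc, ← Category.assoc, Category.assoc (kernel.lift _ _ _), hl i j]
  refine ⟨{ hom := fun i j => kernel.lift (p.f j) (q i j) (hq i j) ≫ (e j).inv
            zero := ?_
            comm := ?_ }⟩
  · intro i j hn
    haveI := hmonoι j
    rw [← cancel_mono (ι.f j), Category.assoc, hl i j, zero_comp]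
    rw [hqeq, hw0 i j (fun h => hn (by simp [h])), sub_zero,
      hszero i j (by simpa using hn)]
  · intro n
    haveI := hmonoι n
    rw [← cancel_mono (ι.f n)]
    rw [dNext_eq _ (show (ComplexShape.down ℤ).Rel n (n-1) by simp),
        prevD_eq _ (show (ComplexShape.down ℤ).Rel (n+1) n by simp)]
    have hι2 : (kernel p).d (n+1) n ≫ ι.f n = ι.f (n+1) ≫ P.d (n+1) n := (ι.comm (n+1) n).symm
    simp only [Preadditive.add_comp, Category.assoc, zero_f, zero_comp, add_zero]
    rw [hι2, hl', hl, ← comp_f, ← hqd n]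
end

section
/- Let M and N be chain complexes of R-modules. If N lies in the subprojectivity domain of M[-1] and also in the subprojectivity domain of M (in the category of complexes), then for every integer n the module N_n lies in the subprojectivity domain of the module M_n. -/
open CategoryTheory CategoryTheory.Limits

universe u

namespace SubprojAux

variable {R : Type u} [Ring R]

lemma conj_congr {C : Type*} [Category C] {X Y : ℤ → C} (t : ∀ k, X k ⟶ Y k) {a b : ℤ}
    (h : a = b) {A B : C} {p : A = X a} {q : Y a = B} (p' : A = X b) (q' : Y b = B) :
    eqToHom p ≫ t a ≫ eqToHom q = eqToHom p' ≫ t b ≫ eqToHom q' := by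
  subst h; subst p; subst q; simp

section Contraction

variable (P : ChainComplex (ModuleCat.{u} R) ℤ)

/-- The contractible complex `⊕ D(P_i)` with an epi onto `P`. -/
noncomputable def DP : ChainComplex (ModuleCat.{u} R) ℤ where
  X j := P.X j ⊞ P.X (j + 1)
  d i j := if h : j + 1 = i then
      biprod.fst ≫ eqToHom (congrArg P.X h.symm) ≫ biprod.inr else 0
  shape i j hij := dif_neg (by simpa using hij)
  d_comp_d' i j k hij hjk := by
    simp only [ComplexShape.down_Rel] at hij hjk
    rw [dif_pos hij, dif_pos hjk]
    simp

noncomputable def phiP : DP P ⟶ P where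
  f j := biprod.desc (𝟙 _) (P.d (j + 1) j)
  comm' i j hij := by
    simp only [ComplexShape.down_Rel] at hij
    subst hij
    dsimp [DP]
    rw [if_pos rfl]
    apply biprod.hom_ext' <;> simp

lemma epi_phiP : Epi (phiP P) := by
  apply HomologicalComplex.epi_of_epi_f
  intro i
  have h : biprod.inl ≫ (phiP P).f i = 𝟙 (P.X i) := biprod.inl_desc _ _
  exact epi_of_epi_fac h

noncomputable def sD (i : ℤ) : (DP P).X i ⟶ (DP P).X (i + 1) :=
  (biprod.snd : (DP P).X i ⟶ P.X (i + 1)) ≫ biprod.inl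

lemma exists_contraction (hP : Projective P) :
    ∃ s : ∀ i j : ℤ, P.X i ⟶ P.X j,
      ∀ i j k : ℤ, j = i + 1 → k + 1 = i →
        s i j ≫ P.d j i + P.d i k ≫ s k i = 𝟙 (P.X i) := by
  haveI := hP
  haveI : Epi (phiP P) := epi_phiP P
  set σ : P ⟶ DP P := Projective.factorThru (𝟙 P) (phiP P) with hσdef
  have hσ : σ ≫ phiP P = 𝟙 P := Projective.factorThru_comp _ _
  refine ⟨fun i j => if h : j = i + 1 then
      σ.f i ≫ sD P i ≫ (phiP P).f (i + 1) ≫ eqToHom (congrArg P.X h.symm)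
    else 0, ?_⟩
  intro i j k hj hk
  subst hj; subst hk
  dsimp only
  rw [dif_pos rfl, dif_pos rfl]
  simp only [eqToHom_refl, Category.comp_id, Category.assoc]
  have c1 : (phiP P).f (k + 1 + 1) ≫ P.d (k + 1 + 1) (k + 1)
      = (DP P).d (k + 1 + 1) (k + 1) ≫ (phiP P).f (k + 1) := (phiP P).comm _ _
  have c2 : P.d (k + 1) k ≫ σ.f k = σ.f (k + 1) ≫ (DP P).d (k + 1) k := (σ.comm _ _).symm
  have key : sD P (k + 1) ≫ (DP P).d (k + 1 + 1) (k + 1) + (DP P).d (k + 1) k ≫ sD P k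
      = 𝟙 ((DP P).X (k + 1)) := by
    dsimp [sD, DP]
    rw [if_pos rfl, if_pos rfl]
    simp only [eqToHom_refl, Category.id_comp]
    simp only [Category.assoc, biprod.inl_fst_assoc, biprod.inr_snd_assoc]
    exact (add_comm _ _).trans biprod.total
  have t1 : σ.f (k + 1) ≫ sD P (k + 1) ≫ (phiP P).f (k + 1 + 1) ≫ P.d (k + 1 + 1) (k + 1)
      = σ.f (k + 1) ≫ sD P (k + 1) ≫ (DP P).d (k + 1 + 1) (k + 1) ≫ (phiP P).f (k + 1) := by
    rw [c1]
  have t2 : P.d (k + 1) k ≫ σ.f k ≫ sD P k ≫ (phiP P).f (k + 1)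
      = σ.f (k + 1) ≫ (DP P).d (k + 1) k ≫ sD P k ≫ (phiP P).f (k + 1) := by
    rw [← Category.assoc, c2, Category.assoc]
  rw [t1, t2, ← Preadditive.comp_add]
  have t3 : sD P (k + 1) ≫ (DP P).d (k + 1 + 1) (k + 1) ≫ (phiP P).f (k + 1)
        + (DP P).d (k + 1) k ≫ sD P k ≫ (phiP P).f (k + 1) = (phiP P).f (k + 1) := by
    rw [← Category.assoc, ← Category.assoc, ← Preadditive.add_comp, key, Category.id_comp]
  rw [t3, ← HomologicalComplex.comp_f, hσ, HomologicalComplex.id_f]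

end Contraction

section Components

/-- A "disc-like" complex: `A` in every degree, with the only nonzero differential
being the identity `A ⟶ A` from degree `m` to degree `m - 1`. -/
noncomputable def discC (m : ℤ) (A : ModuleCat.{u} R) : ChainComplex (ModuleCat.{u} R) ℤ where
  X _ := A
  d i j := if j + 1 = i ∧ i = m then 𝟙 A else 0
  shape i j hij := by
    rw [if_neg]
    rintro ⟨h, -⟩
    exact absurd h (by simpa using hij)
  d_comp_d' i j k hij hjk := by
    simp only [ComplexShape.down_Rel] at hij hjk
    by_cases h : i = m
    · rw [if_neg (by rintro ⟨h1, h2⟩; omega : ¬(k + 1 = j ∧ j = m)), comp_zero]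
    · rw [if_neg (fun hc => h hc.2), zero_comp]

noncomputable def discMap (m : ℤ) {A B : ModuleCat.{u} R} (e : A ⟶ B) :
    discC m A ⟶ discC m B where
  f _ := e
  comm' i j hij := by
    dsimp [discC]
    split_ifs <;> simp

lemma projective_component {P : ChainComplex (ModuleCat.{u} R) ℤ} (hP : Projective P) (n : ℤ) :
    Projective (P.X n) := by
  haveI := hP
  constructor
  intro E Z g e he
  haveI := he
  let ψ : P ⟶ discC (n + 1) Z :=
    { f := fun i => if h : i = n then eqToHom (congrArg P.X h) ≫ g else P.d i n ≫ g
      comm' := by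
        intro i j hij
        simp only [ComplexShape.down_Rel] at hij
        subst hij
        dsimp only [discC]
        by_cases hj : j = n
        · subst hj
          rw [if_pos ⟨rfl, rfl⟩, dif_neg (by omega : ¬ j + 1 = j), dif_pos rfl]
          simp
        · rw [if_neg (by rintro ⟨-, h2⟩; exact hj (by omega) : ¬(j + 1 = j + 1 ∧ j + 1 = n + 1)),
            comp_zero, dif_neg hj]
          simp }
  haveI : Epi (discMap (n + 1) e) :=
    HomologicalComplex.epi_of_epi_f _ (fun i => he)
  refine ⟨(Projective.factorThru ψ (discMap (n + 1) e)).f n, ?_⟩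
  have hχ : Projective.factorThru ψ (discMap (n + 1) e) ≫ discMap (n + 1) e = ψ :=
    Projective.factorThru_comp _ _
  have h2 := congrArg (fun t => HomologicalComplex.Hom.f t n) hχ
  simp only [HomologicalComplex.comp_f] at h2
  rw [show (discMap (n + 1) e).f n = e from rfl] at h2
  refine h2.trans ?_
  simp [ψ]
  exact Category.id_comp _

end Components

section Main

variable (M N : ChainComplex (ModuleCat.{u} R) ℤ)

/-- The chain map `M[-1] ⟶ N` induced by `f : M_n ⟶ N_n`. -/
noncomputable def Gmap (n : ℤ) (f : M.X n ⟶ N.X n) : shiftNegOne M ⟶ N where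
  f i :=
    if h : i = n then
      -(M.d (i + 1) i ≫ eqToHom (congrArg M.X h) ≫ f ≫ eqToHom (congrArg N.X h.symm))
    else if h' : i + 1 = n then
      (eqToHom (congrArg M.X h') ≫ f ≫ N.d n i : M.X (i + 1) ⟶ N.X i)
    else 0
  comm' i j hij := by
    simp only [ComplexShape.down_Rel] at hij
    subst hij
    dsimp only [shiftNegOne]
    by_cases h1 : j = n
    · subst h1
      erw [dif_neg (by omega : ¬ j + 1 = j), dif_neg (by omega : ¬ j + 1 + 1 = j), dif_pos rfl]
      simp
      exact zero_comp
    · by_cases h2 : j + 1 = n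
      · subst h2
        erw [dif_pos rfl, dif_neg h1, dif_pos rfl]
        simp
      · by_cases h3 : j + 1 + 1 = n
        · subst h3
          erw [dif_neg (by omega : ¬ j + 1 = j + 1 + 1), dif_pos rfl, dif_neg h1, dif_neg h2]
          simp
          exact comp_zero.symm
        · erw [dif_neg (by omega : ¬ j + 1 = n), dif_neg h3, dif_neg h1, dif_neg h2]
          exact zero_comp.trans comp_zero.symm

variable {M N} (n : ℤ) (f : M.X n ⟶ N.X n)
variable (P : ChainComplex (ModuleCat.{u} R) ℤ) (α : shiftNegOne M ⟶ P) (β : P ⟶ N)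
variable (s : ∀ i j : ℤ, P.X i ⟶ P.X j)

/-- The component of `Gmap`, retyped. -/
noncomputable def Gf (i : ℤ) : M.X (i + 1) ⟶ N.X i := (Gmap M N n f).f i

/-- The degreewise "homotopy correction" term. -/
noncomputable def Kf (k : ℤ) : M.X (k + 1) ⟶ N.X (k + 1) :=
  (α.f k : M.X (k + 1) ⟶ P.X k) ≫ s k (k + 1) ≫ β.f (k + 1)

lemma Kf_d (hαβ : α ≫ β = Gmap M N n f)
    (hs : ∀ i j k : ℤ, j = i + 1 → k + 1 = i →
      s i j ≫ P.d j i + P.d i k ≫ s k i = 𝟙 (P.X i)) (k : ℤ) :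
    Kf P α β s (k + 1) ≫ N.d (k + 1 + 1) (k + 1)
      = Gf n f (k + 1) + M.d (k + 1 + 1) (k + 1) ≫ Kf P α β s k := by
  have hG : (α.f (k + 1) : M.X (k + 1 + 1) ⟶ P.X (k + 1)) ≫ β.f (k + 1)
      = Gf n f (k + 1) := by
    show (α ≫ β).f (k + 1) = _
    rw [hαβ]; rfl
  have hβ : β.f (k + 1 + 1) ≫ N.d (k + 1 + 1) (k + 1)
      = P.d (k + 1 + 1) (k + 1) ≫ β.f (k + 1) := β.comm _ _
  have hα := α.comm (k + 1) k
  dsimp only [shiftNegOne] at hα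
  have hs' : s (k + 1) (k + 1 + 1) ≫ P.d (k + 1 + 1) (k + 1)
      = 𝟙 (P.X (k + 1)) - P.d (k + 1) k ≫ s k (k + 1) := by
    rw [← hs (k + 1) (k + 1 + 1) k rfl rfl]; abel
  dsimp only [Kf]
  erw [Category.assoc, Category.assoc]
  rw [hβ, ← Category.assoc (s (k + 1) (k + 1 + 1)), hs']
  simp only [Preadditive.sub_comp, Preadditive.comp_sub, Category.id_comp, Category.assoc]
  erw [Preadditive.comp_sub]
  erw [hG]
  erw [← Category.assoc (α.f (k + 1) : M.X (k + 1 + 1) ⟶ P.X (k + 1)), hα]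
  simp only [Preadditive.neg_comp, Category.assoc, sub_neg_eq_add]
  erw [Preadditive.neg_comp, Category.assoc, sub_neg_eq_add]
  rfl

/-- The chain map `M ⟶ N` which is `f` in degree `n`, corrected by the contraction of `P`. -/
noncomputable def Hmap (hαβ : α ≫ β = Gmap M N n f)
    (hs : ∀ i j k : ℤ, j = i + 1 → k + 1 = i →
      s i j ≫ P.d j i + P.d i k ≫ s k i = 𝟙 (P.X i)) : M ⟶ N where
  f i := (if h : i = n then eqToHom (congrArg M.X h) ≫ f ≫ eqToHom (congrArg N.X h.symm) else 0)
    - eqToHom (congrArg M.X (show i = (i - 1) + 1 by omega)) ≫ Kf P α β s (i - 1) ≫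
        eqToHom (congrArg N.X (show (i - 1) + 1 = i by omega))
  comm' i j hij := by
    simp only [ComplexShape.down_Rel] at hij
    obtain ⟨k, rfl⟩ : ∃ k, j = k + 1 := ⟨j - 1, by omega⟩
    subst hij
    rw [conj_congr (Kf P α β s) (show k + 1 + 1 - 1 = k + 1 by omega) rfl rfl,
      conj_congr (Kf P α β s) (show k + 1 - 1 = k by omega) rfl rfl]
    simp only [eqToHom_refl, Category.id_comp, Category.comp_id]
    have hδ : (if h : k + 1 + 1 = n then
          eqToHom (congrArg M.X h) ≫ f ≫ eqToHom (congrArg N.X h.symm) else 0) ≫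
            N.d (k + 1 + 1) (k + 1)
        = Gf n f (k + 1) + M.d (k + 1 + 1) (k + 1) ≫
            (if h : k + 1 = n then
              eqToHom (congrArg M.X h) ≫ f ≫ eqToHom (congrArg N.X h.symm) else 0) := by
      dsimp only [Gf, Gmap]
      by_cases h1 : k + 1 = n
      · subst h1
        erw [dif_neg (by omega : ¬ k + 1 + 1 = k + 1), dif_pos rfl, dif_pos rfl]
        simp
      · by_cases h2 : k + 1 + 1 = n
        · subst h2
          erw [dif_pos rfl, dif_neg h1, dif_neg h1, dif_pos rfl]
          simp
        · erw [dif_neg h2, dif_neg h1, dif_neg h1, dif_neg h2]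
          simp
          exact (add_zero _).symm
    rw [Preadditive.sub_comp, Preadditive.comp_sub, hδ, Kf_d n f P α β s hαβ hs k]
    abel

end Main

end SubprojAux

/-- if `N` is in the subprojectivity domain of `M[-1]` and of `M` (as
complexes), then `N_n` is in the subprojectivity domain of `M_n` for every `n`. -/
theorem componentwise_subprojDomain_of_shift
    {R : Type u} [Ring R] (M N : ChainComplex (ModuleCat.{u} R) ℤ)
    (h1 : SubprojDomain (shiftNegOne M) N) (h2 : SubprojDomain M N) :
    ∀ n : ℤ, SubprojDomain (M.X n) (N.X n) := by
  intro n f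
  obtain ⟨P, hP, α, β, hαβ⟩ := h1 (SubprojAux.Gmap M N n f)
  obtain ⟨s, hs⟩ := SubprojAux.exists_contraction P hP
  obtain ⟨Q, hQ, γ, δ, hγδ⟩ := h2 (SubprojAux.Hmap n f P α β s hαβ hs)
  haveI : Projective (Q.X n) := SubprojAux.projective_component hQ n
  haveI : Projective (P.X (n - 1 + 1)) := SubprojAux.projective_component hP _
  have hHn : γ.f n ≫ δ.f n = (SubprojAux.Hmap n f P α β s hαβ hs).f n := by
    rw [← hγδ]; rfl
  have hfn : (SubprojAux.Hmap n f P α β s hαβ hs).f n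
      = f - eqToHom (congrArg M.X (show n = (n - 1) + 1 by omega)) ≫
          SubprojAux.Kf P α β s (n - 1) ≫
          eqToHom (congrArg N.X (show (n - 1) + 1 = n by omega)) := by
    dsimp only [SubprojAux.Hmap]
    rw [dif_pos rfl]
    simp
  refine ⟨Q.X n ⊞ P.X (n - 1 + 1), inferInstance,
    biprod.lift (γ.f n)
      (eqToHom (congrArg M.X (show n = (n - 1) + 1 by omega)) ≫
        (α.f (n - 1) : M.X (n - 1 + 1) ⟶ P.X (n - 1)) ≫ s (n - 1) (n - 1 + 1)),
    biprod.desc (δ.f n)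
      (β.f (n - 1 + 1) ≫ eqToHom (congrArg N.X (show (n - 1) + 1 = n by omega))), ?_⟩
  rw [biprod.lift_desc, hHn, hfn]
  dsimp only [SubprojAux.Kf]
  simp only [Category.assoc]
  erw [Category.assoc (α.f (n - 1))]
  abel
end

section
/- Let n be an integer, N a chain complex of R-modules, and M an R-module. If N lies in the subprojectivity domain of the sphere complex underline{M}[n] (the complex with M concentrated in degree n), then the n-th cycle module Z_n(N) lies in the subprojectivity domain of M in the category of modules. -/
open CategoryTheory CategoryTheory.Limits ZeroObject

universe u

namespace SphereAux

variable {R : Type u} [Ring R]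

lemma epi_of_components {K L : ChainComplex (ModuleCat.{u} R) ℤ} (φ : K ⟶ L)
    (h : ∀ i, Epi (φ.f i)) : Epi φ := by
  constructor
  intro Z g₁ g₂ hg
  refine HomologicalComplex.hom_ext _ _ fun i => ?_
  have h2 : φ.f i ≫ g₁.f i = φ.f i ≫ g₂.f i := by
    have := congrArg (fun ψ => HomologicalComplex.Hom.f ψ i) hg
    simpa using this
  haveI := h i
  exact (cancel_epi (φ.f i)).1 h2

/-- The disc complex with `A` in degrees `k+1` and `k`, differential the identity. -/
@[reducible] noncomputable def disc (A : ModuleCat.{u} R) (k : ℤ) : ChainComplex (ModuleCat.{u} R) ℤ where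
  X j := if j = k + 1 ∨ j = k then A else 0
  d i j := if h : i = k + 1 ∧ j = k then
      eqToHom (if_pos (Or.inl h.1)) ≫ eqToHom (if_pos (Or.inr h.2)).symm
    else 0
  shape i j hij := by
    skip
    rw [dif_neg]
    rintro ⟨h1, h2⟩
    exact hij (by simp only [ComplexShape.down_Rel]; omega)
  d_comp_d' i j l hij hjl := by
    skip
    by_cases h : i = k + 1 ∧ j = k
    · rw [dif_neg (show ¬(j = k + 1 ∧ l = k) by rintro ⟨a, b⟩; omega), comp_zero]
    · rw [dif_neg h, zero_comp]

noncomputable def discMap {A B : ModuleCat.{u} R} (g : A ⟶ B) (k : ℤ) :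
    disc A k ⟶ disc B k where
  f j := if h : j = k + 1 ∨ j = k then
      eqToHom (if_pos h) ≫ g ≫ eqToHom (if_pos h).symm else 0
  comm' i j hij := by
    obtain rfl : i = j + 1 := hij.symm
    by_cases h2 : j = k
    · subst h2
      dsimp only [disc]
      rw [dif_pos (Or.inl rfl : j + 1 = j + 1 ∨ j + 1 = j),
        dif_pos (⟨rfl, rfl⟩ : j + 1 = j + 1 ∧ j = j),
        dif_pos (Or.inr rfl : j = j + 1 ∨ j = j)]
      simp
    · dsimp only [disc]
      rw [dif_neg (show ¬(j + 1 = k + 1 ∧ j = k) by rintro ⟨a, b⟩; exact h2 b)]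
      simp [h2]

lemma epi_discMap {A B : ModuleCat.{u} R} (g : A ⟶ B) [Epi g] (k : ℤ) :
    Epi (discMap g k) := by
  apply epi_of_components
  intro i
  dsimp [discMap]
  split_ifs with h
  · infer_instance
  · constructor
    intro Z v₁ v₂ _
    exact (IsZero.of_iso (isZero_zero _) (eqToIso (if_neg h))).eq_of_src v₁ v₂

lemma projective_X {P : ChainComplex (ModuleCat.{u} R) ℤ} (hP : Projective P) (k : ℤ) :
    Projective (P.X k) := by
  haveI := hP
  constructor
  intro E Y u e he
  -- the chain map `P ⟶ disc Y k` induced by `u`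
  let w : P ⟶ disc Y k :=
    { f := fun j =>
        if h1 : j = k + 1 then
          eqToHom (congrArg P.X h1) ≫ P.d (k+1) k ≫ u ≫
            eqToHom (show Y = (disc Y k).X j from (if_pos (Or.inl h1)).symm)
        else if h2 : j = k then
          eqToHom (congrArg P.X h2) ≫ u ≫
            eqToHom (show Y = (disc Y k).X j from (if_pos (Or.inr h2)).symm)
        else 0
      comm' := by
        intro i j hij
        obtain rfl : i = j + 1 := hij.symm
        by_cases h2 : j = k
        · subst h2
          dsimp only [disc]
          rw [dif_pos (rfl : j + 1 = j + 1),
            dif_pos (⟨rfl, rfl⟩ : j + 1 = j + 1 ∧ j = j),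
            dif_neg (show ¬(j = j + 1) by omega), dif_pos (rfl : j = j)]
          simp
        · by_cases h1 : j = k + 1
          · subst h1
            dsimp only [disc]
            rw [dif_neg (show ¬(k + 1 + 1 = k + 1) by omega),
              dif_neg (show ¬(k + 1 + 1 = k) by omega),
              dif_pos (rfl : k + 1 = k + 1)]
            simp
          · dsimp only [disc]
            rw [dif_neg (show ¬(j + 1 = k + 1 ∧ j = k) by rintro ⟨a, b⟩; exact h2 b),
              dif_neg h1, dif_neg h2]
            simp }
  haveI := epi_discMap e k
  let L := Projective.factorThru w (discMap e k)
  have hL : L ≫ discMap e k = w := Projective.factorThru_comp _ _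
  have hLk := congrArg (fun ψ => HomologicalComplex.Hom.f ψ k) hL
  refine ⟨L.f k ≫ eqToHom (show (disc E k).X k = E from if_pos (Or.inr rfl)), ?_⟩
  dsimp only [HomologicalComplex.comp_f, discMap, w] at hLk
  rw [dif_pos (Or.inr rfl), dif_neg (by omega), dif_pos rfl] at hLk
  rw [← cancel_mono (eqToHom (show Y = (disc Y k).X k from (if_pos (Or.inr rfl)).symm))]
  simpa using hLk

/-- The contractible "cylinder-like" complex with `X k = P.X k ⊞ P.X (k+1)` and a
degreewise split epimorphism onto `P`. -/
@[reducible] noncomputable def cyl (P : ChainComplex (ModuleCat.{u} R) ℤ) :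
    ChainComplex (ModuleCat.{u} R) ℤ where
  X k := P.X k ⊞ P.X (k + 1)
  d i j := if h : j + 1 = i then
      biprod.fst ≫ eqToHom (congrArg P.X h.symm) ≫ biprod.inr else 0
  shape i j hij := by
    skip
    exact dif_neg hij
  d_comp_d' i j l hij hjl := by
    skip
    rw [dif_pos (show j + 1 = i from hij), dif_pos (show l + 1 = j from hjl)]
    simp

noncomputable def cylπ (P : ChainComplex (ModuleCat.{u} R) ℤ) : cyl P ⟶ P where
  f k := biprod.desc (𝟙 (P.X k)) (P.d (k+1) k)
  comm' i j hij := by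
    obtain rfl : i = j + 1 := hij.symm
    dsimp only [cyl]
    rw [dif_pos (rfl : j + 1 = j + 1)]
    apply biprod.hom_ext' <;> simp

lemma epi_cylπ (P : ChainComplex (ModuleCat.{u} R) ℤ) : Epi (cylπ P) := by
  apply epi_of_components
  intro i
  have : biprod.inl ≫ (cylπ P).f i = 𝟙 (P.X i) := by simp [cylπ]
  exact epi_of_epi_fac this

lemma projective_cycles {P : ChainComplex (ModuleCat.{u} R) ℤ} (hP : Projective P) (n : ℤ) :
    Projective (P.cycles n) := by
  haveI := hP
  haveI := epi_cylπ P
  let s : P ⟶ cyl P := Projective.factorThru (𝟙 P) (cylπ P)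
  have hs : s ≫ cylπ P = 𝟙 P := Projective.factorThru_comp _ _
  let r : P.cycles n ⟶ P.X (n + 1) := P.iCycles n ≫ s.f n ≫ biprod.snd
  let ι : P.X (n + 1) ⟶ P.cycles n :=
    P.liftCycles (P.d (n+1) n) ((ComplexShape.down ℤ).next n) rfl (by simp)
  have hι : ι ≫ P.iCycles n = P.d (n+1) n := by simp [ι]
  -- `iCycles ≫ (s.f n ≫ fst) = 0`
  have hzero : P.iCycles n ≫ s.f n ≫ biprod.fst = 0 := by
    have hcomm := s.comm n (n - 1)
    have h1 : (cyl P).d n (n - 1) =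
        biprod.fst ≫ eqToHom (congrArg P.X (show n = n - 1 + 1 by omega)) ≫ biprod.inr := by
      dsimp only [cyl]
      rw [dif_pos (by omega)]
    rw [h1] at hcomm
    have h2 := congrArg (fun q => P.iCycles n ≫ q ≫ (biprod.snd : _ ⟶ P.X (n - 1 + 1))) hcomm
    dsimp at h2
    simp only [Category.assoc, biprod.inr_snd, Category.comp_id,
      HomologicalComplex.iCycles_d_assoc, zero_comp, comp_zero] at h2
    rw [← cancel_mono (eqToHom (congrArg P.X (show n = n - 1 + 1 by omega)))]
    simpa [Category.assoc] using h2
  have hone : P.iCycles n ≫ s.f n ≫ (cylπ P).f n = P.iCycles n := by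
    have := congrArg (fun ψ => P.iCycles n ≫ HomologicalComplex.Hom.f ψ n) hs
    simpa using this
  have hr : r ≫ ι = 𝟙 (P.cycles n) := by
    rw [← cancel_mono (P.iCycles n)]
    rw [Category.assoc, hι, Category.id_comp]
    have hdesc : (cylπ P).f n = biprod.fst ≫ 𝟙 (P.X n) + biprod.snd ≫ P.d (n+1) n := by
      dsimp only [cylπ]
      rw [biprod.desc_eq]
    rw [hdesc] at hone
    simp only [Preadditive.comp_add, Category.comp_id, Category.assoc] at hone
    rw [hzero, zero_add] at hone
    simpa [r, Category.assoc] using hone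
  haveI hX := projective_X hP (n + 1)
  constructor
  intro E Y g e he
  refine ⟨r ≫ Projective.factorThru (ι ≫ g) e, ?_⟩
  rw [Category.assoc, Projective.factorThru_comp, ← Category.assoc, hr, Category.id_comp]

end SphereAux

/-- if the complex `N` lies in the subprojectivity domain of the sphere complex
`M` concentrated in degree `n`, then the cycle module `Z_n(N)` lies in the subprojectivity
domain of the module `M`. -/
theorem cycles_subprojDomain_of_sphere
    {R : Type u} [Ring R] (n : ℤ) (N : ChainComplex (ModuleCat.{u} R) ℤ)
    (M : ModuleCat.{u} R)
    (h : SubprojDomain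
      ((HomologicalComplex.single (ModuleCat.{u} R) (ComplexShape.down ℤ) n).obj M) N) :
    SubprojDomain M (N.cycles n) := by
  intro f
  obtain ⟨P, hP, a, b, hab⟩ :=
    h (HomologicalComplex.mkHomFromSingle (f ≫ N.iCycles n) (fun k hk => by simp))
  refine ⟨P.cycles n, SphereAux.projective_cycles hP n,
    (HomologicalComplex.singleObjCyclesSelfIso _ n M).inv ≫ HomologicalComplex.cyclesMap a n,
    HomologicalComplex.cyclesMap b n, ?_⟩
  rw [Category.assoc, ← HomologicalComplex.cyclesMap_comp, hab]
  rw [← cancel_mono (N.iCycles n)]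
  simp
end

section
/- Let M and N be chain complexes of R-modules such that N_{n+1} lies in the subprojectivity domain of M_n for every integer n. Then N lies in the subprojectivity domain of M (in the category of complexes) if and only if every chain map M → N is null-homotopic, i.e., Hom_{K(R)}(M, N) = 0. -/
open CategoryTheory CategoryTheory.Limits

universe u

namespace SubprojAux

variable {R : Type u} [Ring R]

abbrev prodOb (A B : ModuleCat.{u} R) : ModuleCat.{u} R := ModuleCat.of R (A × B)

def pr1 (A B : ModuleCat.{u} R) : prodOb A B ⟶ A := ModuleCat.ofHom (LinearMap.fst R A B)
def pr2 (A B : ModuleCat.{u} R) : prodOb A B ⟶ B := ModuleCat.ofHom (LinearMap.snd R A B)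
def pair {C A B : ModuleCat.{u} R} (f : C ⟶ A) (g : C ⟶ B) : C ⟶ prodOb A B :=
  ModuleCat.ofHom (LinearMap.prod f.hom g.hom)
def copair {A B C : ModuleCat.{u} R} (f : A ⟶ C) (g : B ⟶ C) : prodOb A B ⟶ C :=
  ModuleCat.ofHom (LinearMap.coprod f.hom g.hom)
def inl (A B : ModuleCat.{u} R) : A ⟶ prodOb A B := ModuleCat.ofHom (LinearMap.inl R A B)
def inr (A B : ModuleCat.{u} R) : B ⟶ prodOb A B := ModuleCat.ofHom (LinearMap.inr R A B)

@[simp] lemma pair_pr1 {C A B : ModuleCat.{u} R} (f : C ⟶ A) (g : C ⟶ B) :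
    pair f g ≫ pr1 A B = f := rfl
@[simp] lemma pair_pr2 {C A B : ModuleCat.{u} R} (f : C ⟶ A) (g : C ⟶ B) :
    pair f g ≫ pr2 A B = g := rfl
@[simp] lemma comp_pair {D C A B : ModuleCat.{u} R} (w : D ⟶ C) (f : C ⟶ A) (g : C ⟶ B) :
    w ≫ pair f g = pair (w ≫ f) (w ≫ g) := rfl
@[simp] lemma pair_pr1_assoc {C A B D : ModuleCat.{u} R} (f : C ⟶ A) (g : C ⟶ B) (w : A ⟶ D) :
    pair f g ≫ pr1 A B ≫ w = f ≫ w := rfl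
@[simp] lemma pair_pr2_assoc {C A B D : ModuleCat.{u} R} (f : C ⟶ A) (g : C ⟶ B) (w : B ⟶ D) :
    pair f g ≫ pr2 A B ≫ w = g ≫ w := rfl
@[simp] lemma inl_copair {A B C : ModuleCat.{u} R} (f : A ⟶ C) (g : B ⟶ C) :
    inl A B ≫ copair f g = f := ModuleCat.hom_ext (LinearMap.coprod_inl f.hom g.hom)
@[simp] lemma inr_copair {A B C : ModuleCat.{u} R} (f : A ⟶ C) (g : B ⟶ C) :
    inr A B ≫ copair f g = g := ModuleCat.hom_ext (LinearMap.coprod_inr f.hom g.hom)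
@[simp] lemma copair_comp {A B C D : ModuleCat.{u} R} (f : A ⟶ C) (g : B ⟶ C) (w : C ⟶ D) :
    copair f g ≫ w = copair (f ≫ w) (g ≫ w) := by
  dsimp only [copair]; exact ModuleCat.hom_ext (LinearMap.comp_coprod w.hom f.hom g.hom)
@[simp] lemma pair_copair {D A B C : ModuleCat.{u} R} (u : D ⟶ A) (v : D ⟶ B)
    (f : A ⟶ C) (g : B ⟶ C) : pair u v ≫ copair f g = u ≫ f + v ≫ g :=
  ModuleCat.hom_ext (LinearMap.coprod_comp_prod f.hom g.hom u.hom v.hom)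
@[simp] lemma pair_zero {C A B : ModuleCat.{u} R} : pair (0 : C ⟶ A) (0 : C ⟶ B) = 0 :=
  ModuleCat.hom_ext (LinearMap.ext fun _ => rfl)
@[simp] lemma inl_pr1 {A B : ModuleCat.{u} R} : inl A B ≫ pr1 A B = 𝟙 A := rfl
@[simp] lemma inl_pr2 {A B : ModuleCat.{u} R} : inl A B ≫ pr2 A B = 0 := rfl
@[simp] lemma inr_pr1 {A B : ModuleCat.{u} R} : inr A B ≫ pr1 A B = 0 := rfl
@[simp] lemma inr_pr2 {A B : ModuleCat.{u} R} : inr A B ≫ pr2 A B = 𝟙 B := rfl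
@[simp] lemma pair_id_zero {A B : ModuleCat.{u} R} : pair (𝟙 A) (0 : A ⟶ B) = inl A B :=
  ModuleCat.hom_ext (LinearMap.ext fun _ => rfl)
@[simp] lemma copair_zero_left {A B C : ModuleCat.{u} R} (g : B ⟶ C) :
    copair (0 : A ⟶ C) g = pr2 A B ≫ g := by
  dsimp only [copair, pr2]; exact ModuleCat.hom_ext (LinearMap.coprod_zero_left g.hom)

lemma prod_hom_ext {A B C : ModuleCat.{u} R} {f g : prodOb A B ⟶ C}
    (h1 : inl A B ≫ f = inl A B ≫ g) (h2 : inr A B ≫ f = inr A B ≫ g) : f = g :=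
  ModuleCat.hom_ext (LinearMap.prod_ext (congrArg ModuleCat.Hom.hom h1)
    (congrArg ModuleCat.Hom.hom h2))

def pCast (P : ℤ → ModuleCat.{u} R) {i j : ℤ} (h : i = j) : P i ⟶ P j :=
  eqToHom (congrArg P h)

@[simp] lemma pCast_rfl (P : ℤ → ModuleCat.{u} R) (i : ℤ) : pCast P (rfl : i = i) = 𝟙 _ := rfl
@[simp] lemma pCast_comp (P : ℤ → ModuleCat.{u} R) {i j k : ℤ} (h : i = j) (h' : j = k) :
    pCast P h ≫ pCast P h' = pCast P (h.trans h') := by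
  subst h h'; simp

lemma castNat {c : ComplexShape ℤ} {A B : HomologicalComplex (ModuleCat.{u} R) c}
    (u : A ⟶ B) {i j : ℤ} (h : i = j) :
    (A.XIsoOfEq h).hom ≫ u.f j = u.f i ≫ (B.XIsoOfEq h).hom := by
  subst h; simp

section Cone

variable (P : ChainComplex (ModuleCat.{u} R) ℤ)

/-- A contractible complex surjecting onto `P`. -/
noncomputable def coneAux : ChainComplex (ModuleCat.{u} R) ℤ :=
  ChainComplex.of (fun k => prodOb (P.X k) (P.X (k + 1)))
    (fun n => pair (pr1 _ _ ≫ P.d (n + 1) n)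
      (pr1 _ _ - pr2 _ _ ≫ P.d (n + 1 + 1) (n + 1)))
    (fun n => by
      simp only [comp_pair, Preadditive.comp_sub, Preadditive.sub_comp, pair_pr1, pair_pr2,
        pair_pr1_assoc, pair_pr2_assoc, Category.assoc, HomologicalComplex.d_comp_d,
        comp_zero, zero_comp, sub_zero, sub_self, pair_zero])

/-- A contractible complex surjecting onto `P`. -/
@[reducible] noncomputable def cone : ChainComplex (ModuleCat.{u} R) ℤ :=
  { coneAux P with X := fun k => prodOb (P.X k) (P.X (k + 1)) }

@[simp] lemma cone_X (k : ℤ) : (cone P).X k = prodOb (P.X k) (P.X (k + 1)) := rfl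

lemma cone_d (n : ℤ) : (cone P).d (n + 1) n =
    pair (pr1 _ _ ≫ P.d (n + 1) n) (pr1 _ _ - pr2 _ _ ≫ P.d (n + 1 + 1) (n + 1)) := by
  simp [cone, coneAux, ChainComplex.of, ChainComplex.of.d]

/-- The canonical projection from the cone onto `P`. -/
noncomputable def conePi : cone P ⟶ P where
  f k := pr1 _ _
  comm' i j hij := by
    have hij' : j + 1 = i := hij
    subst hij'
    rw [cone_d]
    simp

instance : Epi (conePi P) := by
  apply HomologicalComplex.epi_of_epi_f
  intro i
  rw [ModuleCat.epi_iff_surjective]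
  exact fun x => ⟨(x, 0), rfl⟩

lemma nullHomotopicId (hP : Projective P) : Nonempty (Homotopy (𝟙 P) 0) := by
  haveI := hP
  set σ : P ⟶ cone P := Projective.factorThru (𝟙 P) (conePi P) with hσdef
  have hσ : σ ≫ conePi P = 𝟙 P := Projective.factorThru_comp _ _
  have hσ1 : ∀ k, σ.f k ≫ pr1 _ _ = 𝟙 (P.X k) := fun k =>
    HomologicalComplex.congr_hom hσ k
  refine ⟨{
    hom := fun i j =>
      if hij : j = i + 1 then
        σ.f i ≫ pr2 (P.X i) (P.X (i + 1)) ≫ (P.XIsoOfEq hij.symm).hom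
      else 0
    zero := fun i j hij => dif_neg (by
      intro hc
      exact hij (by simpa using hc.symm))
    comm := fun i => ?_ }⟩
  obtain ⟨m, rfl⟩ : ∃ m, i = m + 1 := ⟨i - 1, by omega⟩
  rw [dNext_eq _ (show (ComplexShape.down ℤ).Rel (m + 1) m by simp),
    prevD_eq _ (show (ComplexShape.down ℤ).Rel (m + 1 + 1) (m + 1) by simp)]
  simp only [dif_pos rfl]
  have hcomm : σ.f (m + 1) ≫ (cone P).d (m + 1) m = P.d (m + 1) m ≫ σ.f m :=
    σ.comm (m + 1) m
  rw [cone_d] at hcomm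
  have key := congrArg (fun w => w ≫ pr2 (P.X m) (P.X (m + 1))) hcomm
  simp only [Category.assoc, pair_pr2, Preadditive.comp_sub, Preadditive.sub_comp] at key
  rw [hσ1 (m + 1)] at key
  -- key : 𝟙 - σ.f (m+1) ≫ pr2 ≫ P.d = P.d (m+1) m ≫ σ.f m ≫ pr2
  simp only [dite_true, HomologicalComplex.id_f, HomologicalComplex.zero_f, add_zero,
    HomologicalComplex.XIsoOfEq_rfl, Iso.refl_hom, Category.comp_id, Category.assoc]
  rw [← key]
  abel

end Cone

lemma homotopic_of_factor {M N : ChainComplex (ModuleCat.{u} R) ℤ} (f : M ⟶ N)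
    (Pc : ChainComplex (ModuleCat.{u} R) ℤ) (hP : Projective Pc)
    (a : M ⟶ Pc) (b : Pc ⟶ N) (hab : a ≫ b = f) : Nonempty (Homotopy f 0) := by
  obtain ⟨H⟩ := nullHomotopicId Pc hP
  exact ⟨(Homotopy.ofEq (show f = a ≫ (𝟙 Pc ≫ b) by rw [← hab]; simp)).trans
    (((H.compRight b).compLeft a).trans (Homotopy.ofEq (by simp)))⟩

section Disks

variable (P : ℤ → ModuleCat.{u} R)

/-- The direct sum of disk complexes `D(P n)` placed in degrees `n + 1` and `n`. -/
noncomputable def disksAux : ChainComplex (ModuleCat.{u} R) ℤ :=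
  ChainComplex.of (fun k => prodOb (P k) (P (k - 1)))
    (fun n => pair (pr2 _ _ ≫ pCast P (show n + 1 - 1 = n by omega)) 0)
    (fun n => by
      simp only [comp_pair, pair_pr2_assoc, zero_comp, comp_zero, pair_zero])

/-- The direct sum of disk complexes `D(P n)` placed in degrees `n + 1` and `n`. -/
@[reducible] noncomputable def disks : ChainComplex (ModuleCat.{u} R) ℤ :=
  { disksAux P with X := fun k => prodOb (P k) (P (k - 1)) }

@[simp] lemma disks_X (k : ℤ) : (disks P).X k = prodOb (P k) (P (k - 1)) := rfl

lemma disks_d (n : ℤ) : (disks P).d (n + 1) n =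
    pair (pr2 _ _ ≫ pCast P (show n + 1 - 1 = n by omega)) 0 := by
  simp [disks, disksAux, ChainComplex.of, ChainComplex.of.d]

lemma inr_diskCast {i j : ℤ} (h : i = j) :
    inr (P i) (P (i - 1)) ≫ ((disks P).XIsoOfEq h).hom =
      pCast P (show i - 1 = j - 1 by rw [h]) ≫ inr (P j) (P (j - 1)) := by
  subst h; simp

lemma t_cast {X : ChainComplex (ModuleCat.{u} R) ℤ} (t : ∀ n, P n ⟶ X.X (n + 1))
    {i j : ℤ} (h : i = j) :
    t i ≫ (X.XIsoOfEq (show i + 1 = j + 1 by rw [h])).hom = pCast P h ≫ t j := by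
  subst h; simp

/-- A chain map out of the disk complex determined by a family of maps `P n ⟶ X (n+1)`. -/
noncomputable def mkHom (X : ChainComplex (ModuleCat.{u} R) ℤ) (t : ∀ n, P n ⟶ X.X (n + 1)) :
    disks P ⟶ X where
  f k := copair (t k ≫ X.d (k + 1) k)
    (t (k - 1) ≫ (X.XIsoOfEq (show k - 1 + 1 = k by omega)).hom)
  comm' i j hij := by
    have hij' : j + 1 = i := hij
    subst hij'
    rw [disks_d]
    dsimp only [disks_X]
    simp only [copair_comp, Category.assoc, HomologicalComplex.d_comp_d, comp_zero,
      copair_zero_left, pair_copair, zero_comp, add_zero]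
    rw [← Category.assoc (t (j + 1 - 1)), t_cast P t (show j + 1 - 1 = j by omega)]
    simp [Category.assoc]

lemma mkHom_f (X : ChainComplex (ModuleCat.{u} R) ℤ) (t : ∀ n, P n ⟶ X.X (n + 1)) (k : ℤ) :
    (mkHom P X t).f k = copair (t k ≫ X.d (k + 1) k)
      (t (k - 1) ≫ (X.XIsoOfEq (show k - 1 + 1 = k by omega)).hom) := rfl

lemma dA_cast (M : ChainComplex (ModuleCat.{u} R) ℤ) (A : ∀ n, M.X n ⟶ P n)
    {i j : ℤ} (h : i = j) {k : ℤ} :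
    M.d k i ≫ A i ≫ pCast P h = M.d k j ≫ A j := by
  subst h; simp

/-- A chain map into the disk complex determined by a family of maps `M n ⟶ P n`. -/
noncomputable def mkTo (M : ChainComplex (ModuleCat.{u} R) ℤ) (A : ∀ n, M.X n ⟶ P n) :
    M ⟶ disks P where
  f k := pair (A k) (M.d k (k - 1) ≫ A (k - 1))
  comm' i j hij := by
    have hij' : j + 1 = i := hij
    subst hij'
    rw [disks_d]
    simp only [comp_pair, pair_pr2_assoc, comp_zero, Category.assoc]
    rw [dA_cast P M A (show j + 1 - 1 = j by omega)]
    have h2 : M.d (j + 1) j ≫ M.d j (j - 1) ≫ A (j - 1) = 0 := by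
      rw [← Category.assoc, HomologicalComplex.d_comp_d, zero_comp]
    rw [h2]

lemma mkTo_f (M : ChainComplex (ModuleCat.{u} R) ℤ) (A : ∀ n, M.X n ⟶ P n) (k : ℤ) :
    (mkTo P M A).f k = pair (A k) (M.d k (k - 1) ≫ A (k - 1)) := rfl

lemma inr_diskCast_assoc {i j : ℤ} (h : i = j) {Z : ModuleCat.{u} R}
    (w : (disks P).X j ⟶ Z) :
    inr (P i) (P (i - 1)) ≫ ((disks P).XIsoOfEq h).hom ≫ w =
      pCast P (show i - 1 = j - 1 by rw [h]) ≫ inr (P j) (P (j - 1)) ≫ w := by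
  subst h; simp

lemma disks_projective (hP : ∀ n, Projective (P n)) : Projective (disks P) := by
  constructor
  intro E X g e he
  haveI := he
  haveI : ∀ n, Projective (P n) := hP
  set tg : ∀ n, P n ⟶ X.X (n + 1) := fun n =>
    pCast P (show n = n + 1 - 1 by omega) ≫ inr (P (n + 1)) (P (n + 1 - 1)) ≫ g.f (n + 1)
    with htg
  set lt : ∀ n, P n ⟶ E.X (n + 1) := fun n => Projective.factorThru (tg n) (e.f (n + 1))
    with hlt
  have hlte : ∀ n, lt n ≫ e.f (n + 1) = tg n := fun n => Projective.factorThru_comp _ _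
  refine ⟨mkHom P E lt, ?_⟩
  apply HomologicalComplex.hom_ext
  intro k
  rw [HomologicalComplex.comp_f, mkHom_f]
  apply prod_hom_ext
  · -- first component
    have e1 : inl (P k) (P (k - 1)) ≫ copair (lt k ≫ E.d (k + 1) k)
        (lt (k - 1) ≫ (E.XIsoOfEq (show k - 1 + 1 = k by omega)).hom) ≫ e.f k =
        lt k ≫ E.d (k + 1) k ≫ e.f k := by
      rw [← Category.assoc, inl_copair, Category.assoc]
    rw [e1, ← e.comm (k + 1) k, ← Category.assoc, hlte k, htg]
    simp only [Category.assoc]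
    rw [g.comm (k + 1) k, disks_d]
    have s1 : inr (P (k + 1)) (P (k + 1 - 1)) ≫
        pair (pr2 (P (k + 1)) (P (k + 1 - 1)) ≫ pCast P (show k + 1 - 1 = k by omega))
          (0 : prodOb (P (k + 1)) (P (k + 1 - 1)) ⟶ P (k - 1)) ≫ g.f k =
        pair (pCast P (show k + 1 - 1 = k by omega))
          (0 : P (k + 1 - 1) ⟶ P (k - 1)) ≫ g.f k := by
      rw [← Category.assoc, comp_pair, comp_zero, ← Category.assoc, inr_pr2, Category.id_comp]
    rw [s1, ← Category.assoc, comp_pair, comp_zero, pCast_comp]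
    simp
  · -- second component
    have e2 : inr (P k) (P (k - 1)) ≫ copair (lt k ≫ E.d (k + 1) k)
        (lt (k - 1) ≫ (E.XIsoOfEq (show k - 1 + 1 = k by omega)).hom) ≫ e.f k =
        (lt (k - 1) ≫ (E.XIsoOfEq (show k - 1 + 1 = k by omega)).hom) ≫ e.f k := by
      rw [← Category.assoc, inr_copair]
    rw [e2, Category.assoc, castNat e (show k - 1 + 1 = k by omega),
      ← Category.assoc, hlte (k - 1), htg]
    simp only [Category.assoc]
    rw [← castNat g (show k - 1 + 1 = k by omega), inr_diskCast_assoc,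
      ← Category.assoc, pCast_comp]
    simp

lemma homCast {M N : ChainComplex (ModuleCat.{u} R) ℤ} {f g : M ⟶ N} (σ : Homotopy f g)
    {i j j' : ℤ} (h : j = j') :
    σ.hom i j ≫ (N.XIsoOfEq h).hom = σ.hom i j' := by
  subst h; simp

end Disks

end SubprojAux

open SubprojAux in
/-- if `N_{n+1}` lies in the subprojectivity domain of `M_n` for every `n`,
then `N` lies in the subprojectivity domain of `M` iff every chain map `M ⟶ N` is
null-homotopic. -/
theorem subprojDomain_iff_homotopic_to_zero
    {R : Type u} [Ring R] (M N : ChainComplex (ModuleCat.{u} R) ℤ)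
    (h : ∀ n : ℤ, SubprojDomain (M.X n) (N.X (n + 1))) :
    SubprojDomain M N ↔ ∀ f : M ⟶ N, Nonempty (Homotopy f 0) := by
  constructor
  · intro hs f
    obtain ⟨Pc, hP, a, b, hab⟩ := hs f
    exact homotopic_of_factor f Pc hP a b hab
  · intro hh f
    obtain ⟨σ⟩ := hh f
    choose P hP A B hAB using fun n => h n (σ.hom n (n + 1))
    refine ⟨disks P, disks_projective P hP, mkTo P M A, mkHom P N B, ?_⟩
    apply HomologicalComplex.hom_ext
    intro n
    rw [HomologicalComplex.comp_f, mkTo_f, mkHom_f, pair_copair]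
    have hf := σ.comm n
    rw [dNext_eq σ.hom (show (ComplexShape.down ℤ).Rel n (n - 1) by simp),
      prevD_eq σ.hom (show (ComplexShape.down ℤ).Rel (n + 1) n by simp)] at hf
    rw [hf]
    have k1 : A n ≫ B n ≫ N.d (n + 1) n = σ.hom n (n + 1) ≫ N.d (n + 1) n := by
      rw [← Category.assoc, hAB n]
    have k2 : A (n - 1) ≫ B (n - 1) ≫ (N.XIsoOfEq (show n - 1 + 1 = n by omega)).hom =
        σ.hom (n - 1) n := by
      rw [← Category.assoc, hAB (n - 1), homCast σ (show n - 1 + 1 = n by omega)]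
    simp only [Category.assoc]
    rw [k1, k2]
    simp only [HomologicalComplex.zero_f, add_zero]
    abel
end

section
/- A ring R is semisimple if and only if for every R-module M and every exact chain complex N of R-modules, whenever there exists an integer n such that N_{n+1} lies in the subprojectivity domain of M, the complex N lies in the subprojectivity domain of the sphere complex underline{M}[n]. -/
open CategoryTheory CategoryTheory.Limits

universe u

variable {R : Type u} [Ring R]

namespace DiskAux

/-- Objects of the disk complex with `A` in degrees `m+1` and `m`. -/
def diskX (m : ℤ) (A : ModuleCat.{u} R) : ℤ → ModuleCat.{u} R :=
  fun i => if i = m + 1 then A else if i = m then A else ModuleCat.of R PUnit.{u+1}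

lemma diskX_top (m : ℤ) (A : ModuleCat.{u} R) : diskX m A (m + 1) = A := if_pos rfl

lemma diskX_bot (m : ℤ) (A : ModuleCat.{u} R) : diskX m A m = A := by
  rw [diskX, if_neg (by omega), if_pos rfl]

lemma diskX_eq_top {m i : ℤ} (A : ModuleCat.{u} R) (h : i = m + 1) : diskX m A i = A := by
  rw [h, diskX_top]

lemma diskX_eq_bot {m i : ℤ} (A : ModuleCat.{u} R) (h : i = m) : diskX m A i = A := by
  rw [h, diskX_bot]

lemma diskX_isZero {m i : ℤ} (A : ModuleCat.{u} R) (h1 : i ≠ m + 1) (h2 : i ≠ m) :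
    IsZero (diskX m A i) := by
  rw [diskX, if_neg h1, if_neg h2]
  exact ModuleCat.isZero_of_subsingleton _

/-- The disk complex: `A` in degrees `m+1` and `m`, identity differential. -/
noncomputable abbrev disk (m : ℤ) (A : ModuleCat.{u} R) : ChainComplex (ModuleCat.{u} R) ℤ where
  X := diskX m A
  d i j := if h : i = m + 1 ∧ j = m then
      eqToHom ((diskX_eq_top A h.1).trans (diskX_eq_bot A h.2).symm) else 0
  shape i j hij := by
    beta_reduce
    rw [dif_neg]
    rintro ⟨rfl, rfl⟩
    exact hij (by simp)
  d_comp_d' i j k hij hjk := by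
    simp only [ComplexShape.down_Rel] at hij hjk
    beta_reduce
    by_cases h : i = m + 1 ∧ j = m
    · rw [dif_neg (fun h' : j = m + 1 ∧ k = m => by omega), comp_zero]
    · rw [dif_neg h, zero_comp]

lemma disk_d (m : ℤ) (A : ModuleCat.{u} R) :
    (disk m A).d (m + 1) m =
      eqToHom ((diskX_top m A).trans (diskX_bot m A).symm) :=
  dif_pos ⟨rfl, rfl⟩

lemma disk_d_eq_zero (m : ℤ) (A : ModuleCat.{u} R) {i j : ℤ} (h : ¬(i = m + 1 ∧ j = m)) :
    (disk m A).d i j = 0 := dif_neg h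

variable {m : ℤ} {A : ModuleCat.{u} R}

lemma disk_d_eq {i j : ℤ} (hi : i = m + 1) (hj : j = m) :
    (disk m A).d i j = eqToHom ((diskX_eq_top A hi).trans (diskX_eq_bot A hj).symm) :=
  dif_pos ⟨hi, hj⟩

/-- Morphisms out of the disk complex, from `φ : A ⟶ K.X (m+1)`. -/
noncomputable def diskDesc {K : ChainComplex (ModuleCat.{u} R) ℤ} (φ : A ⟶ K.X (m + 1)) :
    disk m A ⟶ K where
  f i :=
    if h1 : i = m + 1 then
      eqToHom (diskX_eq_top A h1) ≫ φ ≫ eqToHom (congrArg K.X h1.symm)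
    else if h2 : i = m then
      eqToHom (diskX_eq_bot A h2) ≫ φ ≫ K.d (m + 1) i
    else 0
  comm' i j hij := by
    simp only [ComplexShape.down_Rel] at hij
    beta_reduce
    by_cases h1 : i = m + 1
    · have hj : j = m := by omega
      subst h1
      have hj' : (m : ℤ) = j := hj.symm
      subst hj'
      rw [dif_pos rfl, dif_neg (by omega), dif_pos rfl, disk_d_eq rfl rfl]
      simp
    · by_cases h2 : i = m
      · have h2' : m = i := h2.symm
        subst h2'
        rw [dif_neg h1, dif_pos rfl, dif_neg (by omega), dif_neg (by omega),
          disk_d_eq_zero m A (by omega), zero_comp]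
        simp
      · rw [dif_neg h1, dif_neg h2, disk_d_eq_zero m A (by omega), zero_comp, zero_comp]

@[simp]
lemma diskDesc_f_top {K : ChainComplex (ModuleCat.{u} R) ℤ} (φ : A ⟶ K.X (m + 1)) :
    (diskDesc φ).f (m + 1) = eqToHom (diskX_top m A) ≫ φ := by
  dsimp only [diskDesc]
  rw [dif_pos rfl]
  simp

@[simp]
lemma diskDesc_f_bot {K : ChainComplex (ModuleCat.{u} R) ℤ} (φ : A ⟶ K.X (m + 1)) :
    (diskDesc φ).f m = eqToHom (diskX_bot m A) ≫ φ ≫ K.d (m + 1) m := by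
  dsimp only [diskDesc]
  rw [dif_neg (by omega), dif_pos rfl]

/-- Morphisms into the disk complex, from `φ : K.X m ⟶ A`. -/
noncomputable def diskLift {K : ChainComplex (ModuleCat.{u} R) ℤ} (φ : K.X m ⟶ A) :
    K ⟶ disk m A where
  f i :=
    if h1 : i = m + 1 then
      K.d i m ≫ φ ≫ eqToHom (diskX_eq_top A h1).symm
    else if h2 : i = m then
      eqToHom (congrArg K.X h2) ≫ φ ≫ eqToHom (diskX_eq_bot A h2).symm
    else 0
  comm' i j hij := by
    simp only [ComplexShape.down_Rel] at hij
    beta_reduce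
    by_cases h1 : i = m + 1
    · have hj : j = m := by omega
      subst h1
      have hj' : (m : ℤ) = j := hj.symm
      subst hj'
      rw [dif_pos rfl, dif_neg (by omega), dif_pos rfl, disk_d_eq rfl rfl]
      simp
    · by_cases h2 : i = m
      · have h2' : m = i := h2.symm
        subst h2'
        rw [dif_neg h1, dif_pos rfl, dif_neg (by omega), dif_neg (by omega),
          disk_d_eq_zero m A (by omega), comp_zero, comp_zero]
      · by_cases h3 : i = m + 2
        · have hj : j = m + 1 := by omega
          subst h3 hj
          rw [dif_neg h1, dif_neg h2, dif_pos rfl,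
            disk_d_eq_zero m A (by omega), comp_zero]
          rw [← Category.assoc, ← Category.assoc, HomologicalComplex.d_comp_d, zero_comp,
            zero_comp]
        · rw [dif_neg h1, dif_neg h2, dif_neg (by omega), dif_neg (by omega),
            comp_zero, disk_d_eq_zero m A (by omega), comp_zero]

@[simp]
lemma diskLift_f_bot {K : ChainComplex (ModuleCat.{u} R) ℤ} (φ : K.X m ⟶ A) :
    (diskLift φ).f m = φ ≫ eqToHom (diskX_bot m A).symm := by
  dsimp only [diskLift]
  rw [dif_neg (by omega), dif_pos rfl]
  simp

/-- The disk complex construction is functorial. -/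
noncomputable def diskMap {B : ModuleCat.{u} R} (e : A ⟶ B) : disk m A ⟶ disk m B where
  f i :=
    if h1 : i = m + 1 then
      eqToHom (diskX_eq_top A h1) ≫ e ≫ eqToHom (diskX_eq_top B h1).symm
    else if h2 : i = m then
      eqToHom (diskX_eq_bot A h2) ≫ e ≫ eqToHom (diskX_eq_bot B h2).symm
    else 0
  comm' i j hij := by
    simp only [ComplexShape.down_Rel] at hij
    beta_reduce
    by_cases h1 : i = m + 1
    · have hj : j = m := by omega
      subst h1
      have hj' : (m : ℤ) = j := hj.symm
      subst hj'
      rw [dif_pos rfl, dif_neg (by omega), dif_pos rfl, disk_d_eq rfl rfl,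
        disk_d_eq rfl rfl]
      simp
    · rw [dif_neg h1, disk_d_eq_zero m A (fun h => h1 h.1),
        disk_d_eq_zero m B (fun h => h1 h.1), zero_comp, comp_zero]

instance diskMap_epi {B : ModuleCat.{u} R} (e : A ⟶ B) [Epi e] : Epi (diskMap (m := m) e) := by
  apply HomologicalComplex.epi_of_epi_f
  intro i
  dsimp only [diskMap]
  by_cases h1 : i = m + 1
  · rw [dif_pos h1]; infer_instance
  · by_cases h2 : i = m
    · rw [dif_neg h1, dif_pos h2]; infer_instance
    · rw [dif_neg h1, dif_neg h2]
      exact ⟨fun g h _ => (diskX_isZero B h1 h2).eq_of_src g h⟩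

/-- Morphisms out of a disk complex are determined by the top component. -/
lemma disk_hom_ext {K : ChainComplex (ModuleCat.{u} R) ℤ} {f g : disk m A ⟶ K}
    (h : f.f (m + 1) = g.f (m + 1)) : f = g := by
  apply HomologicalComplex.hom_ext
  intro i
  by_cases h1 : i = m + 1
  · subst h1; exact h
  · by_cases h2 : i = m
    · have h2' : m = i := h2.symm
      subst h2'
      have cf := f.comm (m + 1) m
      have cg := g.comm (m + 1) m
      calc f.f m = eqToHom ((diskX_top m A).trans
              (diskX_bot m A).symm).symm ≫ (disk m A).d (m + 1) m ≫ f.f m := by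
            rw [disk_d_eq rfl rfl]; simp
        _ = eqToHom ((diskX_top m A).trans
              (diskX_bot m A).symm).symm ≫ (disk m A).d (m + 1) m ≫ g.f m := by
            rw [← cf, ← cg, h]
        _ = g.f m := by rw [disk_d_eq rfl rfl]; simp
    · exact (diskX_isZero A h1 h2).eq_of_src _ _

/-- The disk complex on a projective module is projective. -/
lemma disk_projective [Projective A] : Projective (disk m A) where
  factors {E X} f e he := by
    obtain ⟨v, hv⟩ := Projective.factors (eqToHom (diskX_top m A).symm ≫ f.f (m + 1)) (e.f (m + 1))
    refine ⟨diskDesc v, disk_hom_ext ?_⟩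
    rw [HomologicalComplex.comp_f, diskDesc_f_top, Category.assoc, hv]
    simp

/-- Each component of a projective chain complex is projective. -/
lemma projective_X_of_projective (Q : ChainComplex (ModuleCat.{u} R) ℤ) (hQ : Projective Q)
    (i : ℤ) : Projective (Q.X i) where
  factors {E X} u e he := by
    obtain ⟨l, hl⟩ := hQ.factors (diskLift (m := i) u) (diskMap (m := i) e)
    refine ⟨l.f i ≫ eqToHom (diskX_bot i E), ?_⟩
    have h0 := congrArg (fun t => HomologicalComplex.Hom.f t i) hl
    dsimp only at h0
    rw [HomologicalComplex.comp_f, diskLift_f_bot] at h0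
    dsimp only [diskMap] at h0
    rw [dif_neg (by omega), dif_pos rfl] at h0
    have h2 : (l.f i ≫ eqToHom (diskX_bot i E)) ≫ e =
        (l.f i ≫ (eqToHom (diskX_eq_bot E rfl) ≫ e ≫ eqToHom (diskX_eq_bot X rfl).symm)) ≫
          eqToHom (diskX_bot i X) := by simp
    rw [h2, h0]
    simp

section Three

variable {A B C0 : ModuleCat.{u} R}

/-- Objects of a three-term complex concentrated in degrees `2, 1, 0`. -/
def threeX (A B C0 : ModuleCat.{u} R) : ℤ → ModuleCat.{u} R :=
  fun i => if i = 0 then C0 else if i = 1 then B else if i = 2 then A else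
    ModuleCat.of R PUnit.{u+1}

lemma threeX_zero (A B C0 : ModuleCat.{u} R) : threeX A B C0 0 = C0 := if_pos rfl

lemma threeX_one (A B C0 : ModuleCat.{u} R) : threeX A B C0 1 = B := by
  rw [threeX, if_neg (by omega), if_pos rfl]

lemma threeX_two (A B C0 : ModuleCat.{u} R) : threeX A B C0 2 = A := by
  rw [threeX, if_neg (by omega), if_neg (by omega), if_pos rfl]

lemma threeX_isZero (A B C0 : ModuleCat.{u} R) (i : ℤ) (h0 : i ≠ 0) (h1 : i ≠ 1)
    (h2 : i ≠ 2) : IsZero (threeX A B C0 i) := by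
  rw [threeX, if_neg h0, if_neg h1, if_neg h2]
  exact ModuleCat.isZero_of_subsingleton _

/-- The three-term chain complex `A ⟶ B ⟶ C0` in degrees `2, 1, 0`. -/
noncomputable def three (f : A ⟶ B) (g : B ⟶ C0) (w : f ≫ g = 0) :
    ChainComplex (ModuleCat.{u} R) ℤ where
  X := threeX A B C0
  d i j :=
    if h : i = 2 ∧ j = 1 then
      eqToHom (by rw [h.1, threeX_two]) ≫ f ≫ eqToHom (by rw [h.2, threeX_one])
    else if h : i = 1 ∧ j = 0 then
      eqToHom (by rw [h.1, threeX_one]) ≫ g ≫ eqToHom (by rw [h.2, threeX_zero])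
    else 0
  shape i j hij := by
    simp only [ComplexShape.down_Rel] at hij
    beta_reduce
    rw [dif_neg (by omega), dif_neg (by omega)]
  d_comp_d' i j k hij hjk := by
    simp only [ComplexShape.down_Rel] at hij hjk
    beta_reduce
    by_cases h : i = 2 ∧ j = 1
    · obtain ⟨hi, hj⟩ := h
      have hk : k = 0 := by omega
      subst hi hj hk
      rw [dif_pos ⟨rfl, rfl⟩, dif_neg (by omega), dif_pos ⟨rfl, rfl⟩]
      simp [reassoc_of% w, w]
    · by_cases h' : i = 1 ∧ j = 0
      · rw [dif_neg h, dif_pos h', dif_neg (by omega), dif_neg (by omega), comp_zero]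
      · rw [dif_neg h, dif_neg h', zero_comp]

lemma three_d_21 (f : A ⟶ B) (g : B ⟶ C0) (w : f ≫ g = 0) :
    (three f g w).d 2 1 =
      eqToHom (threeX_two A B C0) ≫ f ≫ eqToHom (threeX_one A B C0).symm := by
  dsimp only [three]
  rw [dif_pos ⟨rfl, rfl⟩]

lemma three_d_10 (f : A ⟶ B) (g : B ⟶ C0) (w : f ≫ g = 0) :
    (three f g w).d 1 0 =
      eqToHom (threeX_one A B C0) ≫ g ≫ eqToHom (threeX_zero A B C0).symm := by
  dsimp only [three]
  rw [dif_neg (by omega), dif_pos ⟨rfl, rfl⟩]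

lemma three_d_eq_zero (f : A ⟶ B) (g : B ⟶ C0) (w : f ≫ g = 0) {i j : ℤ}
    (h1 : ¬(i = 2 ∧ j = 1)) (h2 : ¬(i = 1 ∧ j = 0)) : (three f g w).d i j = 0 := by
  dsimp only [three]
  rw [dif_neg h1, dif_neg h2]
  rfl

/-- The three-term complex is exact everywhere when `g` is surjective,
`ker g = range f` and `f` is injective. -/
lemma three_exactAt (f : A ⟶ B) (g : B ⟶ C0) (w : f ≫ g = 0)
    (hg : Function.Surjective g) (hgf : ∀ b : B, g b = 0 → ∃ a : A, f a = b)
    (hf : Function.Injective f) (i : ℤ) : (three f g w).ExactAt i := by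
  have hprev : (ComplexShape.down ℤ).prev i = i + 1 :=
    (ComplexShape.down ℤ).prev_eq' (by simp)
  have hnext : (ComplexShape.down ℤ).next i = i - 1 :=
    (ComplexShape.down ℤ).next_eq' (by simp)
  rw [HomologicalComplex.exactAt_iff' _ (i + 1) i (i - 1) hprev hnext]
  rcases (show i = 0 ∨ i = 1 ∨ i = 2 ∨ (i ≠ 0 ∧ i ≠ 1 ∧ i ≠ 2) by omega) with hi | hi | hi | hi
  · subst hi
    rw [ShortComplex.moduleCat_exact_iff]
    intro x _
    exact hg x
  · subst hi
    rw [ShortComplex.moduleCat_exact_iff]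
    intro x hx
    exact hgf x hx
  · subst hi
    rw [ShortComplex.moduleCat_exact_iff]
    intro x hx
    have h1 : f x = 0 := hx
    have hx0 : x = 0 := hf (by rw [h1]; exact (map_zero _).symm)
    exact ⟨0, by rw [hx0]; simp⟩
  · exact ShortComplex.exact_of_isZero_X₂ _ (threeX_isZero A B C0 i hi.1 hi.2.1 hi.2.2)

end Three

/-- Over a semisimple ring, every module is projective. -/
lemma projective_of_isSemisimpleRing [IsSemisimpleRing R] (M : Type u) [AddCommGroup M]
    [Module R M] : Module.Projective R M := by
  classical
  set π : (M →₀ R) →ₗ[R] M := Finsupp.linearCombination R id with hπdef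
  have hsurj : Function.Surjective π := fun m => ⟨Finsupp.single m 1, by simp [hπdef]⟩
  obtain ⟨C, hC⟩ := exists_isCompl (LinearMap.ker π)
  set q : C →ₗ[R] M := π ∘ₗ C.subtype with hqdef
  have hqinj : Function.Injective q := by
    intro x y hxy
    have hmem : ((x - y : C) : M →₀ R) ∈ LinearMap.ker π ⊓ C := by
      refine ⟨?_, (x - y).2⟩
      have hx : π (x : M →₀ R) = π (y : M →₀ R) := hxy
      show π ((x - y : C) : M →₀ R) = 0
      simp [map_sub, hx]
    rw [hC.inf_eq_bot] at hmem
    have : (x : M →₀ R) - (y : M →₀ R) = 0 := by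
      simpa [Submodule.coe_sub] using hmem
    exact Subtype.ext (by rw [sub_eq_zero] at this; exact this)
  have hqsurj : Function.Surjective q := by
    intro mtarget
    obtain ⟨x, hx⟩ := hsurj mtarget
    have hx' : x ∈ LinearMap.ker π ⊔ C := by rw [hC.sup_eq_top]; trivial
    obtain ⟨y, hy, z, hz, hyz⟩ := Submodule.mem_sup.mp hx'
    refine ⟨⟨z, hz⟩, ?_⟩
    have : π x = π y + π z := by rw [← hyz, map_add]
    rw [hx] at this
    simp only [LinearMap.mem_ker] at hy
    rw [hy, zero_add] at this
    exact (by simpa [hqdef] using this.symm)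
  let e := LinearEquiv.ofBijective q ⟨hqinj, hqsurj⟩
  refine Module.projective_def.mpr ⟨C.subtype ∘ₗ (e.symm : M →ₗ[R] C), fun m => ?_⟩
  have : π (C.subtype (e.symm m)) = q (e.symm m) := rfl
  calc Finsupp.linearCombination R id ((C.subtype ∘ₗ (e.symm : M →ₗ[R] C)) m)
      = q (e.symm m) := rfl
    _ = e (e.symm m) := rfl
    _ = m := e.apply_symm_apply m

end DiskAux

open DiskAux in
/-- `R` is semisimple iff for every module `M` and every exact complex `N`,
whenever there is `n` with `N_{n+1}` in the subprojectivity domain of `M`, the complex `N`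
lies in the subprojectivity domain of the sphere complex `M` concentrated in degree `n`. -/
theorem isSemisimpleRing_iff_subprojDomain
    {R : Type u} [Ring R] :
    IsSemisimpleRing R ↔
      ∀ (M : ModuleCat.{u} R) (N : ChainComplex (ModuleCat.{u} R) ℤ),
        (∀ i : ℤ, N.ExactAt i) →
        ∀ n : ℤ, SubprojDomain M (N.X (n + 1)) →
          SubprojDomain
            ((HomologicalComplex.single (ModuleCat.{u} R) (ComplexShape.down ℤ) n).obj M)
            N := by
  constructor
  · -- forward direction
    intro hss M N hN n _ f
    haveI hM : Module.Projective R M := projective_of_isSemisimpleRing (M : Type u)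
    haveI hMproj : Projective M :=
      Projective.of_iso (Iso.refl M) ((IsProjective.iff_projective _).mp hM)
    set g : M ⟶ N.X n :=
      (HomologicalComplex.singleObjXSelf (ComplexShape.down ℤ) n M).inv ≫ f.f n with hgdef
    have hg : g ≫ N.d n (n - 1) = 0 := by
      have hcomm := f.comm n (n - 1)
      rw [hgdef, Category.assoc, hcomm, HomologicalComplex.single_obj_d, zero_comp, comp_zero]
    have hprev : (ComplexShape.down ℤ).prev n = n + 1 :=
      (ComplexShape.down ℤ).prev_eq' (by simp)
    have hnext : (ComplexShape.down ℤ).next n = n - 1 :=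
      (ComplexShape.down ℤ).next_eq' (by simp)
    have hex := (HomologicalComplex.exactAt_iff' N (n + 1) n (n - 1) hprev hnext).mp (hN n)
    rw [ShortComplex.moduleCat_exact_iff] at hex
    have hmem : ∀ x : M, g x ∈ LinearMap.range (N.d (n + 1) n).hom := by
      intro x
      have hx : N.d n (n - 1) (g x) = 0 := LinearMap.congr_fun (congrArg ModuleCat.Hom.hom hg) x
      exact LinearMap.mem_range.mpr (hex _ hx)
    obtain ⟨h₀, hh₀⟩ := Module.projective_lifting_property
      (LinearMap.rangeRestrict (N.d (n + 1) n).hom) (LinearMap.codRestrict _ g.hom hmem)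
      (LinearMap.surjective_rangeRestrict _)
    have hbd : (ModuleCat.ofHom h₀ : M ⟶ N.X (n + 1)) ≫ N.d (n + 1) n = g :=
      ModuleCat.hom_ext (LinearMap.ext fun x => congrArg Subtype.val (LinearMap.congr_fun hh₀ x))
    refine ⟨disk n M, disk_projective,
      HomologicalComplex.mkHomFromSingle (eqToHom (diskX_bot n M).symm)
        (fun k hk => by
          rw [disk_d_eq_zero n M (by simp only [ComplexShape.down_Rel] at hk; omega),
            comp_zero]),
      diskDesc (ModuleCat.ofHom h₀), ?_⟩
    apply HomologicalComplex.from_single_hom_ext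
    rw [HomologicalComplex.comp_f, HomologicalComplex.mkHomFromSingle_f, diskDesc_f_bot]
    simp only [Category.assoc, eqToHom_trans_assoc, eqToHom_refl, Category.id_comp]
    rw [hbd, hgdef]
    simp
  · -- converse direction
    intro hyp
    classical
    have hproj : ∀ K : ModuleCat.{u} R, Projective K := by
      intro K
      set π : ModuleCat.of R (↑K →₀ R) ⟶ K := ModuleCat.ofHom (Finsupp.linearCombination R id) with hπdef
      have hπ : Function.Surjective π := by
        intro mm
        refine ⟨Finsupp.single mm 1, ?_⟩
        show (Finsupp.linearCombination R (id : ↑K → ↑K)) (Finsupp.single mm (1 : R)) = mm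
        simp
      set ι : ModuleCat.of R (LinearMap.ker π.hom) ⟶ ModuleCat.of R (↑K →₀ R) :=
        ModuleCat.ofHom (LinearMap.ker π.hom).subtype with hιdef
      have w : ι ≫ π = 0 := ModuleCat.hom_ext (LinearMap.ext fun x => x.2)
      set N := three ι π w with hNdef
      have hexact : ∀ i : ℤ, N.ExactAt i :=
        three_exactAt ι π w hπ (fun b hb => ⟨⟨b, hb⟩, rfl⟩) Subtype.val_injective
      have hPF : Projective (N.X (0 + 1)) :=
        (IsProjective.iff_projective _).mp (inferInstance : Module.Projective R (↑K →₀ R))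
      have hsub : SubprojDomain K (N.X (0 + 1)) :=
        fun u => ⟨N.X (0 + 1), hPF, u, 𝟙 _, Category.comp_id u⟩
      set f0 : (HomologicalComplex.single (ModuleCat.{u} R) (ComplexShape.down ℤ) 0).obj K
          ⟶ N :=
        HomologicalComplex.mkHomFromSingle
          (eqToHom (threeX_zero (ModuleCat.of R (LinearMap.ker π.hom))
            (ModuleCat.of R (↑K →₀ R)) K).symm)
          (fun k hk => by
            rw [three_d_eq_zero ι π w (by simp only [ComplexShape.down_Rel] at hk; omega)
              (by simp only [ComplexShape.down_Rel] at hk; omega), comp_zero])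
        with hf0def
      obtain ⟨Q, hQ, a, b, hab⟩ := hyp K N hexact 0 hsub f0
      have hQ0 : Projective (Q.X 0) := projective_X_of_projective Q hQ 0
      set r : Q.X 0 ⟶ K := b.f 0 ≫ eqToHom (threeX_zero (ModuleCat.of R (LinearMap.ker π.hom))
        (ModuleCat.of R (↑K →₀ R)) K) with hrdef
      set i0 : K ⟶ Q.X 0 :=
        (HomologicalComplex.singleObjXSelf (ComplexShape.down ℤ) 0 K).inv ≫ a.f 0 with hi0def
      have hri : i0 ≫ r = 𝟙 K := by
        have hab0 : a.f 0 ≫ b.f 0 = f0.f 0 := by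
          rw [← HomologicalComplex.comp_f, hab]
        rw [hi0def, hrdef, Category.assoc, ← Category.assoc (a.f 0), hab0]
        rw [hf0def, HomologicalComplex.mkHomFromSingle_f]
        simp
        exact (eqToHom_trans _ _).trans (eqToHom_refl _ _)
      constructor
      intro E X u e he
      obtain ⟨v, hv⟩ := hQ0.factors (r ≫ u) e
      exact ⟨i0 ≫ v, by rw [Category.assoc, hv, ← Category.assoc, hri, Category.id_comp]⟩
    refine IsSemisimpleModule.mk (toComplementedLattice := ⟨fun I => ?_⟩)
    have hq : Module.Projective R (R ⧸ I) :=
      (IsProjective.iff_projective _).mpr (hproj (ModuleCat.of R (R ⧸ I)))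
    obtain ⟨s, hs⟩ := Module.projective_lifting_property I.mkQ LinearMap.id I.mkQ_surjective
    refine ⟨LinearMap.range s, ?_, ?_⟩
    · rw [disjoint_iff]
      rw [eq_bot_iff]
      rintro x ⟨hxI, y, rfl⟩
      have hy : y = 0 := by
        have h1 : I.mkQ (s y) = y := LinearMap.congr_fun hs y
        have h2 : I.mkQ (s y) = 0 := (Submodule.Quotient.mk_eq_zero I).mpr hxI
        rw [h1] at h2
        exact h2
      simp [hy]
    · rw [codisjoint_iff, eq_top_iff]
      intro x _
      have hmem : x - s (I.mkQ x) ∈ I := by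
        have h1 : I.mkQ (s (I.mkQ x)) = I.mkQ x := LinearMap.congr_fun hs (I.mkQ x)
        have h2 : I.mkQ (x - s (I.mkQ x)) = 0 := by rw [map_sub, h1, sub_self]
        rwa [Submodule.mkQ_apply, Submodule.Quotient.mk_eq_zero] at h2
      have : x = (x - s (I.mkQ x)) + s (I.mkQ x) := by abel
      rw [this]
      exact Submodule.add_mem_sup hmem ⟨I.mkQ x, rfl⟩
end

section
/- Let N be a chain complex of R-modules and M an R-module. Then N lies in the subprojectivity domain of the sphere complex underline{M}[n] for every integer n if and only if the complex of abelian groups Hom_R(M, N) is exact and N_n lies in the subprojectivity domain of M for every integer n. -/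
open CategoryTheory CategoryTheory.Limits

universe u

/-- The complex of abelian groups `Hom_R(M, N)` associated to a module `M` and a chain
complex `N`. -/
noncomputable def homComplex {R : Type u} [Ring R] (M : ModuleCat.{u} R)
    (N : ChainComplex (ModuleCat.{u} R) ℤ) : ChainComplex AddCommGrpCat.{u} ℤ :=
  ((preadditiveCoyoneda.obj (Opposite.op M)).mapHomologicalComplex
    (ComplexShape.down ℤ)).obj N

section Aux

variable {R : Type u} [Ring R]

/-- The "disc" complex with `X` in degrees `n+1` and `n` and identity differential. -/
noncomputable def dbl (X : ModuleCat.{u} R) (n : ℤ) : ChainComplex (ModuleCat.{u} R) ℤ where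
  X k := if k = n ∨ k = n + 1 then X else ModuleCat.of R PUnit
  d i j := if h : i = n + 1 ∧ j = n then
      eqToHom (if_pos (Or.inr h.1)) ≫ eqToHom (if_pos (Or.inl h.2)).symm
    else 0
  shape i j hij := by
    beta_reduce
    rw [dif_neg]
    rintro ⟨rfl, rfl⟩
    exact hij (by simp)
  d_comp_d' i j k hij hjk := by
    beta_reduce
    by_cases h : i = n + 1 ∧ j = n
    · rw [dif_neg (by omega : ¬(j = n + 1 ∧ k = n)), comp_zero]
    · rw [dif_neg h, zero_comp]

noncomputable def dblIso (X : ModuleCat.{u} R) (n : ℤ) {k : ℤ} (h : k = n ∨ k = n + 1) :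
    (dbl X n).X k ≅ X := eqToIso (if_pos h)

lemma dbl_isZero (X : ModuleCat.{u} R) (n : ℤ) {k : ℤ} (h : ¬(k = n ∨ k = n + 1)) :
    IsZero ((dbl X n).X k) := by
  dsimp [dbl]
  rw [if_neg h]
  exact ModuleCat.isZero_of_subsingleton _

lemma dbl_d (X : ModuleCat.{u} R) (n : ℤ) :
    (dbl X n).d (n + 1) n = (dblIso X n (Or.inr rfl)).hom ≫ (dblIso X n (Or.inl rfl)).inv := by
  dsimp [dbl, dblIso]
  rw [dif_pos ⟨rfl, rfl⟩]

instance (X : ModuleCat.{u} R) (n : ℤ) : IsIso ((dbl X n).d (n + 1) n) := by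
  rw [dbl_d]; infer_instance

lemma dbl_d_eq_zero (X : ModuleCat.{u} R) (n : ℤ) {i j : ℤ} (h : ¬(i = n + 1 ∧ j = n)) :
    (dbl X n).d i j = 0 := by
  dsimp [dbl]
  rw [dif_neg h]; rfl

noncomputable def fromDbl {X : ModuleCat.{u} R} {n : ℤ} {K : ChainComplex (ModuleCat.{u} R) ℤ}
    (u : X ⟶ K.X (n + 1)) : dbl X n ⟶ K where
  f i :=
    if h : i = n + 1 then (dblIso X n (Or.inr h)).hom ≫ u ≫ (K.XIsoOfEq h).inv
    else if h' : i = n then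
      (dblIso X n (Or.inl h')).hom ≫ u ≫ K.d (n + 1) n ≫ (K.XIsoOfEq h').inv
    else 0
  comm' i j hij := by
    simp only [ComplexShape.down_Rel] at hij
    beta_reduce
    by_cases h1 : i = n + 1
    · obtain rfl : j = n := by omega
      subst h1
      rw [dif_pos rfl, dif_neg (by omega), dif_pos rfl, dbl_d]
      simp
    · by_cases h2 : i = n
      · subst h2
        obtain rfl : j = i - 1 := by omega
        rw [dif_neg h1, dif_pos rfl, dif_neg (by omega), dif_neg (by omega),
          dbl_d_eq_zero X i (by omega)]
        simp
      · rw [dif_neg h1, dif_neg h2, dbl_d_eq_zero X n (fun hc => h1 hc.1)]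
        simp

@[simp] lemma fromDbl_f_top {X : ModuleCat.{u} R} {n : ℤ} {K : ChainComplex (ModuleCat.{u} R) ℤ}
    (u : X ⟶ K.X (n + 1)) :
    (fromDbl u).f (n + 1) = (dblIso X n (Or.inr rfl)).hom ≫ u := by
  dsimp [fromDbl]
  rw [dif_pos rfl]
  simp

lemma fromDbl_ext {X : ModuleCat.{u} R} {n : ℤ} {K : ChainComplex (ModuleCat.{u} R) ℤ}
    (f g : dbl X n ⟶ K) (h : f.f (n + 1) = g.f (n + 1)) : f = g := by
  apply HomologicalComplex.hom_ext
  intro i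
  by_cases h1 : i = n + 1
  · subst h1; exact h
  · by_cases h2 : i = n
    · subst h2
      have hf := f.comm (i + 1) i
      have hg := g.comm (i + 1) i
      rw [← cancel_epi ((dbl X i).d (i + 1) i), ← hf, ← hg, h]
    · exact (dbl_isZero X n (by omega)).eq_of_src _ _

noncomputable def toDbl {X : ModuleCat.{u} R} {n : ℤ} {K : ChainComplex (ModuleCat.{u} R) ℤ}
    (v : K.X n ⟶ X) : K ⟶ dbl X n where
  f i :=
    if h : i = n + 1 then (K.XIsoOfEq h).hom ≫ K.d (n + 1) n ≫ v ≫ (dblIso X n (Or.inr h)).inv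
    else if h' : i = n then (K.XIsoOfEq h').hom ≫ v ≫ (dblIso X n (Or.inl h')).inv
    else 0
  comm' i j hij := by
    simp only [ComplexShape.down_Rel] at hij
    beta_reduce
    by_cases h1 : i = n + 1
    · obtain rfl : j = n := by omega
      subst h1
      rw [dif_pos rfl, dif_neg (by omega), dif_pos rfl, dbl_d]
      simp
    · by_cases h2 : j = n + 1
      · subst h2
        obtain rfl : i = n + 2 := by omega
        rw [dif_neg h1, dif_neg (by omega), dif_pos rfl, dbl_d_eq_zero X n (by omega)]
        simp [K.d_comp_d_assoc]
      · by_cases h3 : j = n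
        · omega
        · rw [dif_neg h2, dif_neg h3, dbl_d_eq_zero X n (fun hc => h1 hc.1)]
          simp

@[simp] lemma toDbl_f_self {X : ModuleCat.{u} R} {n : ℤ} {K : ChainComplex (ModuleCat.{u} R) ℤ}
    (v : K.X n ⟶ X) :
    (toDbl v).f n = v ≫ (dblIso X n (Or.inl rfl)).inv := by
  dsimp [toDbl]
  rw [dif_neg (by omega), dif_pos rfl]
  simp

@[simp] lemma toDbl_f_top {X : ModuleCat.{u} R} {n : ℤ} {K : ChainComplex (ModuleCat.{u} R) ℤ}
    (v : K.X n ⟶ X) :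
    (toDbl v).f (n + 1) = K.d (n + 1) n ≫ v ≫ (dblIso X n (Or.inr rfl)).inv := by
  dsimp [toDbl]
  rw [dif_pos rfl]
  simp

instance dbl_projective (X : ModuleCat.{u} R) (n : ℤ) [Projective X] :
    Projective (dbl X n) where
  factors {E Z} f e he := by
    have : Epi (e.f (n + 1)) := inferInstance
    refine ⟨fromDbl (Projective.factorThru ((dblIso X n (Or.inr rfl)).inv ≫ f.f (n + 1))
      (e.f (n + 1))), fromDbl_ext _ _ ?_⟩
    show (fromDbl _).f (n + 1) ≫ e.f (n + 1) = _
    rw [fromDbl_f_top]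
    simp [Projective.factorThru_comp]

lemma eval_projective (P : ChainComplex (ModuleCat.{u} R) ℤ) [Projective P] (n : ℤ) :
    Projective (P.X n) where
  factors {E T} f e he := by
    have hE : Epi (toDbl ((dblIso E n (Or.inl rfl)).hom ≫ e) : dbl E n ⟶ dbl T n) := by
      apply HomologicalComplex.epi_of_epi_f
      intro i
      by_cases h1 : i = n + 1
      · subst h1
        rw [toDbl_f_top]
        exact epi_comp _ _
      · by_cases h2 : i = n
        · subst h2
          rw [toDbl_f_self]
          exact epi_comp _ _
        · exact ⟨fun g h _ => (dbl_isZero T n (by omega)).eq_of_src g h⟩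
    obtain ⟨F', hF'⟩ := Projective.factors (toDbl f : P ⟶ dbl T n)
      (toDbl ((dblIso E n (Or.inl rfl)).hom ≫ e) : dbl E n ⟶ dbl T n)
    refine ⟨F'.f n ≫ (dblIso E n (Or.inl rfl)).hom, ?_⟩
    have := HomologicalComplex.congr_hom hF' n
    simp only [HomologicalComplex.comp_f, toDbl_f_self] at this
    rw [← cancel_mono (dblIso T n (Or.inl rfl)).inv]
    simpa using this

/-- The contractible complex `C` with `C_k = P_k ⊞ P_{k+1}` and `d (x, y) = (0, x)`. -/
noncomputable def cyl (P : ChainComplex (ModuleCat.{u} R) ℤ) : ChainComplex (ModuleCat.{u} R) ℤ where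
  X k := P.X k ⊞ P.X (k + 1)
  d i j := if h : j + 1 = i then biprod.fst ≫ (P.XIsoOfEq h).inv ≫ biprod.inr else 0
  shape i j hij := dif_neg (by simpa using hij)
  d_comp_d' i j k hij hjk := by
    simp only [ComplexShape.down_Rel] at hij hjk
    beta_reduce
    rw [dif_pos hij, dif_pos hjk]
    simp

attribute [reducible] cyl

noncomputable def cylProj (P : ChainComplex (ModuleCat.{u} R) ℤ) : cyl P ⟶ P where
  f k := (biprod.fst + biprod.snd ≫ P.d (k + 1) k : P.X k ⊞ P.X (k + 1) ⟶ P.X k)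
  comm' i j hij := by
    simp only [ComplexShape.down_Rel] at hij
    subst hij
    beta_reduce
    show _ ≫ _ = (cyl P).d (j + 1) j ≫ _
    have : (cyl P).d (j + 1) j = biprod.fst ≫ (P.XIsoOfEq rfl).inv ≫ biprod.inr := by
      dsimp [cyl]
      rw [if_pos rfl]
    rw [this]
    simp [Preadditive.add_comp, Preadditive.comp_add]

instance (P : ChainComplex (ModuleCat.{u} R) ℤ) : Epi (cylProj P) := by
  apply HomologicalComplex.epi_of_epi_f
  intro i
  have : (biprod.inl : P.X i ⟶ _) ≫ (cylProj P).f i = 𝟙 _ := by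
    dsimp [cylProj]
    simp
  exact epi_of_epi_fac this

/-- In a projective chain complex, cycles are boundaries in a strong sense. -/
lemma projective_lift_d (P : ChainComplex (ModuleCat.{u} R) ℤ) [Projective P]
    {M : ModuleCat.{u} R} {n : ℤ} (f : M ⟶ P.X n) (hf : f ≫ P.d n (n - 1) = 0) :
    ∃ g : M ⟶ P.X (n + 1), g ≫ P.d (n + 1) n = f := by
  obtain ⟨σ, hσ⟩ := Projective.factors (𝟙 P) (cylProj P)
  refine ⟨f ≫ σ.f n ≫ biprod.snd, ?_⟩
  have h0 : (f ≫ σ.f n) ≫ biprod.fst = 0 := by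
    have hc := σ.comm n (n - 1)
    have hd : (cyl P).d n (n - 1) = biprod.fst ≫ (P.XIsoOfEq (by omega : n - 1 + 1 = n)).inv ≫
        biprod.inr := by
      dsimp [cyl]
      rw [dif_pos (by omega)]
    have : (f ≫ σ.f n) ≫ (cyl P).d n (n - 1) = 0 := by
      rw [Category.assoc, hc, ← Category.assoc, hf, zero_comp]
    rw [hd] at this
    rw [← cancel_mono ((P.XIsoOfEq (by omega : n - 1 + 1 = n)).inv ≫ biprod.inr)]
    simpa using this
  have h1 : f ≫ σ.f n ≫ (cylProj P).f n = f := by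
    have := HomologicalComplex.congr_hom hσ n
    rw [HomologicalComplex.comp_f] at this
    rw [this]
    simp
  have h2 : (cylProj P).f n = biprod.fst + biprod.snd ≫ P.d (n + 1) n := rfl
  rw [h2] at h1
  have h1' : f ≫ σ.f n ≫ biprod.fst + f ≫ σ.f n ≫ biprod.snd ≫ P.d (n + 1) n = f := by
    simpa [Preadditive.comp_add] using h1
  have h0' : f ≫ σ.f n ≫ biprod.fst = 0 := by rw [← Category.assoc]; exact h0
  rw [h0', zero_add] at h1'
  simpa using h1'


lemma homComplex_exactAt_iff (M : ModuleCat.{u} R) (N : ChainComplex (ModuleCat.{u} R) ℤ)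
    (i : ℤ) :
    (homComplex M N).ExactAt i ↔
      ∀ x : M ⟶ N.X i, x ≫ N.d i (i - 1) = 0 →
        ∃ y : M ⟶ N.X (i + 1), y ≫ N.d (i + 1) i = x := by
  rw [HomologicalComplex.exactAt_iff' _ (i + 1) i (i - 1)
    ((ComplexShape.down ℤ).prev_eq' (by simp))
    ((ComplexShape.down ℤ).next_eq' (by simp))]
  rw [ShortComplex.ab_exact_iff]
  constructor
  · intro h x hx
    obtain ⟨y, hy⟩ := h x hx
    exact ⟨y, hy⟩
  · intro h x hx
    obtain ⟨y, hy⟩ := h x hx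
    exact ⟨y, hy⟩

lemma projective_lift_d' (P : ChainComplex (ModuleCat.{u} R) ℤ) [Projective P]
    {M : ModuleCat.{u} R} {i j : ℤ} (hij : j + 1 = i) (f : M ⟶ P.X j)
    (hf : f ≫ P.d j (j - 1) = 0) :
    ∃ g : M ⟶ P.X i, g ≫ P.d i j = f := by
  obtain rfl : i = j + 1 := hij.symm
  exact projective_lift_d P f hf

@[simp] lemma fromDbl_f_self {X : ModuleCat.{u} R} {n : ℤ} {K : ChainComplex (ModuleCat.{u} R) ℤ}
    (u : X ⟶ K.X (n + 1)) :
    (fromDbl u).f n = (dblIso X n (Or.inl rfl)).hom ≫ u ≫ K.d (n + 1) n := by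
  dsimp [fromDbl]
  rw [dif_neg (by omega), dif_pos rfl]
  simp


end Aux

/-- `N` lies in the subprojectivity domain of the sphere complex `M[n]` for
every `n` iff the complex of abelian groups `Hom_R(M, N)` is exact and `N_n` lies in the
subprojectivity domain of `M` for every `n`. -/
theorem subprojDomain_all_spheres_iff
    {R : Type u} [Ring R] (N : ChainComplex (ModuleCat.{u} R) ℤ) (M : ModuleCat.{u} R) :
    (∀ n : ℤ, SubprojDomain
        ((HomologicalComplex.single (ModuleCat.{u} R) (ComplexShape.down ℤ) n).obj M) N) ↔
      ((∀ i : ℤ, (homComplex M N).ExactAt i) ∧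
        ∀ n : ℤ, SubprojDomain M (N.X n)) := by
  constructor
  · intro hsub
    have hex : ∀ i : ℤ, ∀ x : M ⟶ N.X i, x ≫ N.d i (i - 1) = 0 →
        ∃ y : M ⟶ N.X (i + 1), y ≫ N.d (i + 1) i = x := by
      intro i x hx
      obtain ⟨P, hP, a, b, hab⟩ := hsub i (HomologicalComplex.mkHomFromSingle x
        (fun k hk => by
          simp only [ComplexShape.down_Rel] at hk
          obtain rfl : k = i - 1 := by omega
          rw [hx]))
      haveI := hP
      have key : a.f i ≫ P.d i (i - 1) = 0 := by
        rw [a.comm i (i - 1), HomologicalComplex.single_obj_d, zero_comp]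
      obtain ⟨w, hw⟩ := projective_lift_d P (a.f i) key
      refine ⟨(HomologicalComplex.singleObjXSelf (ComplexShape.down ℤ) i M).inv ≫ w ≫ b.f (i + 1),
        ?_⟩
      have hb := b.comm (i + 1) i
      rw [Category.assoc, Category.assoc, hb, ← Category.assoc w, hw]
      have := HomologicalComplex.congr_hom hab i
      rw [HomologicalComplex.comp_f, HomologicalComplex.mkHomFromSingle_f] at this
      rw [this, Iso.inv_hom_id_assoc]
    refine ⟨fun i => (homComplex_exactAt_iff M N i).2 (hex i), ?_⟩
    intro n g
    -- factor `g ≫ d` through a projective complex, lift, correct, factor the difference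
    obtain ⟨P, hP, a, b, hab⟩ := hsub (n - 1) (HomologicalComplex.mkHomFromSingle
      (g ≫ N.d n (n - 1)) (fun k hk => by
        simp only [ComplexShape.down_Rel] at hk
        obtain rfl : k = n - 1 - 1 := by omega
        rw [Category.assoc, N.d_comp_d, comp_zero]))
    haveI := hP
    have key : a.f (n - 1) ≫ P.d (n - 1) (n - 1 - 1) = 0 := by
      rw [a.comm (n - 1) (n - 1 - 1), HomologicalComplex.single_obj_d, zero_comp]
    obtain ⟨w, hw⟩ := projective_lift_d' P (by omega : (n - 1) + 1 = n) (a.f (n - 1)) key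
    set ι₁ := HomologicalComplex.singleObjXSelf (ComplexShape.down ℤ) (n - 1) M with hι₁
    set g₁ : M ⟶ N.X n := ι₁.inv ≫ w ≫ b.f n with hg₁def
    have hg₁ : g₁ ≫ N.d n (n - 1) = g ≫ N.d n (n - 1) := by
      have hb := b.comm n (n - 1)
      rw [hg₁def, Category.assoc, Category.assoc, hb, ← Category.assoc w, hw]
      have := HomologicalComplex.congr_hom hab (n - 1)
      rw [HomologicalComplex.comp_f, HomologicalComplex.mkHomFromSingle_f] at this
      rw [this, Iso.inv_hom_id_assoc]
    obtain ⟨Q, hQ, a', b', hab'⟩ := hsub n (HomologicalComplex.mkHomFromSingle (g - g₁)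
      (fun k hk => by
        simp only [ComplexShape.down_Rel] at hk
        obtain rfl : k = n - 1 := by omega
        rw [Preadditive.sub_comp, hg₁, sub_self]))
    haveI := hQ
    haveI : Projective (P.X n) := eval_projective P n
    haveI : Projective (Q.X n) := eval_projective Q n
    set ι₂ := HomologicalComplex.singleObjXSelf (ComplexShape.down ℤ) n M with hι₂
    have hdiff : ι₂.inv ≫ a'.f n ≫ b'.f n = g - g₁ := by
      have := HomologicalComplex.congr_hom hab' n
      rw [HomologicalComplex.comp_f, HomologicalComplex.mkHomFromSingle_f] at this
      rw [this, Iso.inv_hom_id_assoc]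
    refine ⟨P.X n ⊞ Q.X n, inferInstance,
      biprod.lift (ι₁.inv ≫ w) (ι₂.inv ≫ a'.f n), biprod.desc (b.f n) (b'.f n), ?_⟩
    rw [biprod.lift_desc]
    rw [Category.assoc, Category.assoc, hdiff]
    rw [← hg₁def]
    abel
  · rintro ⟨hex, hsub⟩ n F
    set ι := HomologicalComplex.singleObjXSelf (ComplexShape.down ℤ) n M with hι
    set x : M ⟶ N.X n := ι.inv ≫ F.f n with hx
    have hx0 : x ≫ N.d n (n - 1) = 0 := by
      rw [hx, Category.assoc, F.comm n (n - 1), HomologicalComplex.single_obj_d, zero_comp,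
        comp_zero]
    obtain ⟨y, hy⟩ := (homComplex_exactAt_iff M N n).1 (hex n) x hx0
    obtain ⟨Q, hQ, a, b, hab⟩ := hsub (n + 1) y
    haveI := hQ
    refine ⟨dbl Q n, inferInstance,
      HomologicalComplex.mkHomFromSingle (a ≫ (dblIso Q n (Or.inl rfl)).inv)
        (fun k hk => by rw [Category.assoc, dbl_d_eq_zero Q n (by omega), comp_zero, comp_zero]),
      fromDbl b, ?_⟩
    apply HomologicalComplex.from_single_hom_ext
    rw [HomologicalComplex.comp_f, HomologicalComplex.mkHomFromSingle_f, fromDbl_f_self]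
    rw [Category.assoc, Category.assoc, Iso.inv_hom_id_assoc, ← Category.assoc a, hab, hy, hx]
    simp
end

section
/- A chain complex N of R-modules is exact if and only if N lies in the subprojectivity domain of the sphere complex underline{R}[n] for every integer n. -/
open CategoryTheory CategoryTheory.Limits

universe u

namespace SubprojAux

variable {R : Type u} [Ring R]

/-- The contractible cover of a chain complex: `(cover P)ₖ = Pₖ × Pₖ₊₁` with
differential `(x, y) ↦ (0, x)`. -/
noncomputable def cover (P : ChainComplex (ModuleCat.{u} R) ℤ) :
    ChainComplex (ModuleCat.{u} R) ℤ :=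
  ChainComplex.of (fun k => ModuleCat.of R (P.X k × P.X (k + 1)))
    (fun k => ModuleCat.ofHom ((LinearMap.inr R (P.X k) (P.X (k + 1))).comp
      (LinearMap.fst R (P.X (k + 1)) (P.X (k + 1 + 1)))))
    (fun k => ModuleCat.hom_ext (LinearMap.ext fun _ => rfl))

@[simp] lemma cover_X (P : ChainComplex (ModuleCat.{u} R) ℤ) (k : ℤ) :
    (cover P).X k = ModuleCat.of R (P.X k × P.X (k + 1)) := rfl

@[simp] lemma cover_d (P : ChainComplex (ModuleCat.{u} R) ℤ) (k : ℤ) :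
    (cover P).d (k + 1) k = ModuleCat.ofHom ((LinearMap.inr R (P.X k) (P.X (k + 1))).comp
      (LinearMap.fst R (P.X (k + 1)) (P.X (k + 1 + 1)))) :=
  ChainComplex.of_d (fun k => ModuleCat.of R (P.X k × P.X (k + 1)))
    (fun k => ModuleCat.ofHom ((LinearMap.inr R (P.X k) (P.X (k + 1))).comp
      (LinearMap.fst R (P.X (k + 1)) (P.X (k + 1 + 1))))) k

end SubprojAux

namespace SubprojAux

variable {R : Type u} [Ring R]

/-- Projection from the cover: `(x, y) ↦ x + d y`. -/
noncomputable def coverπ (P : ChainComplex (ModuleCat.{u} R) ℤ) : cover P ⟶ P where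
  f k := ModuleCat.ofHom (LinearMap.coprod LinearMap.id (P.d (k + 1) k).hom)
  comm' i j hij := by
    obtain rfl : i = j + 1 := hij.symm
    rw [cover_d]
    ext ⟨x, y⟩
    have h0 := ConcreteCategory.congr_hom (P.d_comp_d (j + 1 + 1) (j + 1) j) y
    simp only [ConcreteCategory.comp_apply, Function.comp_apply] at h0 ⊢
    change P.d (j+1) j (x + P.d (j+1+1) (j+1) y) = 0 + P.d (j+1) j x
    rw [map_add, h0]
    simp

instance (P : ChainComplex (ModuleCat.{u} R) ℤ) : Epi (coverπ P) := by
  apply HomologicalComplex.epi_of_epi_f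
  intro k
  rw [ModuleCat.epi_iff_surjective]
  intro x
  exact ⟨(x, 0), by
    show (LinearMap.coprod LinearMap.id (P.d (k+1) k).hom) (x, 0) = x
    rw [LinearMap.coprod_apply]; simp⟩

/-- Any cycle in a projective complex is a boundary. -/
lemma exists_preimage_of_projective (P : ChainComplex (ModuleCat.{u} R) ℤ)
    (hP : Projective P) (i j k : ℤ) (hij : j + 1 = i) (hjk : k + 1 = j)
    (x : P.X j) (hx : P.d j k x = 0) : ∃ y : P.X i, P.d i j y = x := by
  subst hij hjk
  haveI := hP
  set s := Projective.factorThru (𝟙 P) (coverπ P) with hs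
  have hsπ : s ≫ coverπ P = 𝟙 P := Projective.factorThru_comp _ _
  have h1 := ConcreteCategory.congr_hom (s.comm (k + 1) k) x
  rw [cover_d] at h1
  simp only [ConcreteCategory.comp_apply, Function.comp_apply] at h1
  rw [hx, map_zero] at h1
  -- h1 : (0, (s.f (k+1) x).1) = 0
  have h2 := ConcreteCategory.congr_hom (congr_arg (fun φ => HomologicalComplex.Hom.f φ (k + 1)) hsπ) x
  simp only [HomologicalComplex.comp_f, HomologicalComplex.id_f, ConcreteCategory.comp_apply,
    Function.comp_apply, ModuleCat.id_apply] at h2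
  refine ⟨(s.f (k + 1) x).2, ?_⟩
  have hfst : (s.f (k + 1) x).1 = 0 := congr_arg Prod.snd h1
  rw [show s ≫ coverπ P = s ≫ coverπ P from rfl] at hsπ
  have h3 : (s.f (k + 1) x).1 + P.d (k + 1 + 1) (k + 1) (s.f (k + 1) x).2 = x := by
    exact h2
  rw [hfst, zero_add] at h3
  exact h3

end SubprojAux

namespace cover2

open SubprojAux

variable {R : Type u} [Ring R]

/-- Map out of the cover determined by an arbitrary family of maps. -/
noncomputable def coverDesc (P X : ChainComplex (ModuleCat.{u} R) ℤ)
    (u : ∀ k, P.X k ⟶ X.X k) : cover P ⟶ X where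
  f k := ModuleCat.ofHom (LinearMap.coprod (u k).hom (LinearMap.comp (X.d (k + 1) k).hom (u (k + 1)).hom))
  comm' i j hij := by
    obtain rfl : i = j + 1 := hij.symm
    rw [cover_d]
    ext ⟨x, y⟩
    show (X.d (j+1) j) ((LinearMap.coprod (u (j+1)).hom
        (LinearMap.comp (X.d (j+1+1) (j+1)).hom (u (j+1+1)).hom)) (x, y)) =
      (LinearMap.coprod (u j).hom (LinearMap.comp (X.d (j+1) j).hom (u (j+1)).hom))
        ((LinearMap.inr R _ _) ((LinearMap.fst R _ _) (x, y)))
    rw [LinearMap.coprod_apply, LinearMap.fst_apply, LinearMap.inr_apply,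
      LinearMap.coprod_apply]
    have h0 := ConcreteCategory.congr_hom (X.d_comp_d (j + 1 + 1) (j + 1) j) (u (j+1+1) y)
    simp only [ConcreteCategory.comp_apply, Function.comp_apply] at h0
    erw [map_add, h0, LinearMap.zero_apply]
    simp

lemma coverDesc_f_apply (P X : ChainComplex (ModuleCat.{u} R) ℤ)
    (u : ∀ k, P.X k ⟶ X.X k) (k : ℤ) (x : P.X k) (y : P.X (k + 1)) :
    (coverDesc P X u).f k (x, y) = u k x + X.d (k + 1) k (u (k + 1) y) := rfl

end cover2

namespace SubprojAux

open cover2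

variable {R : Type u} [Ring R]

lemma projective_of_isZero {C : Type*} [Category C] [HasZeroMorphisms C]
    {X : C} (h : IsZero X) : Projective X where
  factors f e _ := ⟨0, by rw [zero_comp]; exact h.eq_of_src 0 f⟩

lemma projective_cover (P : ChainComplex (ModuleCat.{u} R) ℤ)
    (h : ∀ k, Projective (P.X k)) : Projective (cover P) where
  factors {E X'} g e he := by
    haveI := fun k => h k
    let w : ∀ k, P.X k ⟶ X'.X k := fun k =>
      ModuleCat.ofHom (LinearMap.comp (g.f k).hom (LinearMap.inl R (P.X k) (P.X (k + 1))))
    let u : ∀ k, P.X k ⟶ E.X k := fun k => Projective.factorThru (w k) (e.f k)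
    have hu : ∀ k, (u k) ≫ (e.f k) = w k := fun k => Projective.factorThru_comp _ _
    refine ⟨coverDesc P E u, ?_⟩
    ext k ⟨x, y⟩
    show e.f k ((coverDesc P E u).f k (x, y)) = g.f k (x, y)
    rw [coverDesc_f_apply]
    have hx : e.f k (u k x) = g.f k (x, 0) := ConcreteCategory.congr_hom (hu k) x
    have hy : e.f (k + 1) (u (k + 1) y) = g.f (k + 1) (y, 0) :=
      ConcreteCategory.congr_hom (hu (k + 1)) y
    have hcomm := ConcreteCategory.congr_hom (e.comm (k + 1) k) (u (k + 1) y)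
    simp only [ConcreteCategory.comp_apply, Function.comp_apply] at hcomm
    have hg := ConcreteCategory.congr_hom (g.comm (k + 1) k)
      ((y, 0) : ↥(P.X (k+1)) × ↥(P.X (k+1+1)))
    rw [cover_d] at hg
    have hg' : (X'.d (k+1) k) ((g.f (k+1)) (y, 0)) = (g.f k) ((0 : ↥(P.X k)), y) := hg
    have hsplit : ((x, y) : ↥(P.X k) × ↥(P.X (k+1))) = (x, 0) + (0, y) := by
      rw [Prod.mk_add_mk, add_zero, zero_add]
    rw [map_add, hx, ← hcomm, hy, hg', hsplit]
    exact ((g.f k).hom.map_add _ _).symm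

end SubprojAux

namespace SubprojAux

open cover2 HomologicalComplex

variable {R : Type u} [Ring R]

lemma exactAt_iff_elem (N : ChainComplex (ModuleCat.{u} R) ℤ) (i : ℤ) :
    N.ExactAt i ↔
      ∀ x : N.X i, N.d i (i - 1) x = 0 → ∃ y : N.X (i + 1), N.d (i + 1) i y = x := by
  rw [N.exactAt_iff' (i + 1) i (i - 1) (by simp) (by simp)]
  exact (N.sc' (i + 1) i (i - 1)).moduleCat_exact_iff

end SubprojAux

namespace SubprojAux

open HomologicalComplex

variable {R : Type u} [Ring R]

lemma backward (N : ChainComplex (ModuleCat.{u} R) ℤ)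
    (h : ∀ n : ℤ,
      ∀ f : ((single (ModuleCat.{u} R) (ComplexShape.down ℤ) n).obj (ModuleCat.of R R)) ⟶ N,
      ∃ (P : ChainComplex (ModuleCat.{u} R) ℤ) (_ : Projective P)
        (a : _ ⟶ P) (b : P ⟶ N), a ≫ b = f) (i : ℤ) : N.ExactAt i := by
  rw [exactAt_iff_elem]
  intro x hx
  let φ : ModuleCat.of R R ⟶ N.X i := ModuleCat.ofHom (LinearMap.toSpanSingleton R (N.X i) x)
  have hφ : ∀ k, (ComplexShape.down ℤ).Rel i k →
      φ ≫ N.d i k = 0 := by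
    intro k hk
    simp only [ComplexShape.down_Rel] at hk
    obtain rfl : k = i - 1 := by omega
    ext1; apply LinearMap.ext; intro r
    show N.d i (i - 1) (LinearMap.toSpanSingleton R (N.X i) x r) = 0
    rw [LinearMap.toSpanSingleton_apply, map_smul, hx, smul_zero]
  obtain ⟨P, hP, a, b, hab⟩ := h i (mkHomFromSingle φ hφ)
  set ξ := (singleObjXSelf (ComplexShape.down ℤ) i (ModuleCat.of R R)).inv (1 : R) with hξ
  set z := a.f i ξ with hz'
  have hcz : a.f i ≫ P.d i (i - 1) = 0 := by
    rw [a.comm i (i - 1), single_obj_d, zero_comp]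
  have hz : P.d i (i - 1) z = 0 := ConcreteCategory.congr_hom hcz ξ
  obtain ⟨y0, hy0⟩ := exists_preimage_of_projective P hP (i + 1) i (i - 1) rfl (by ring) z hz
  refine ⟨b.f (i + 1) y0, ?_⟩
  have hbc : N.d (i + 1) i (b.f (i + 1) y0) = b.f i (P.d (i + 1) i y0) :=
    ConcreteCategory.congr_hom (b.comm (i + 1) i) y0
  rw [hbc, hy0]
  have h1 : b.f i z = (mkHomFromSingle φ hφ).f i ξ := by
    rw [← hab]; rfl
  rw [h1]
  have h2 := ConcreteCategory.congr_hom
    (mkHomFromSingle_f (K := N) φ hφ) ξ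
  rw [h2]
  have h3 : (singleObjXSelf (ComplexShape.down ℤ) i (ModuleCat.of R R)).hom ξ = (1 : R) := by
    have h0 := ConcreteCategory.congr_hom
      (singleObjXSelf (ComplexShape.down ℤ) i (ModuleCat.of R R)).inv_hom_id (1 : R)
    exact h0
  show LinearMap.toSpanSingleton R (N.X i) x
    ((singleObjXSelf (ComplexShape.down ℤ) i (ModuleCat.of R R)).hom ξ) = x
  rw [h3, LinearMap.toSpanSingleton_apply_one]

end SubprojAux

namespace SubprojAux

open cover2 HomologicalComplex

variable {R : Type u} [Ring R]

lemma forward (N : ChainComplex (ModuleCat.{u} R) ℤ) (hN : ∀ i : ℤ, N.ExactAt i) (n : ℤ)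
    (ff : ((single (ModuleCat.{u} R) (ComplexShape.down ℤ) n).obj (ModuleCat.of R R)) ⟶ N) :
    ∃ (P : ChainComplex (ModuleCat.{u} R) ℤ) (_ : Projective P)
      (a : _ ⟶ P) (b : P ⟶ N), a ≫ b = ff := by
  classical
  set e₀ := singleObjXSelf (ComplexShape.down ℤ) n (ModuleCat.of R R) with he₀
  set ξ := e₀.inv (1 : R) with hξ
  set x := ff.f n ξ with hx
  have hcx : ff.f n ≫ N.d n (n - 1) = 0 := by
    rw [ff.comm n (n - 1), single_obj_d, zero_comp]
  have hdx : N.d n (n - 1) x = 0 := ConcreteCategory.congr_hom hcx ξ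
  obtain ⟨y, hy⟩ := (exactAt_iff_elem N n).1 (hN n) x hdx
  set S := (single (ModuleCat.{u} R) (ComplexShape.down ℤ) (n + 1)).obj (ModuleCat.of R R) with hS
  have hproj : Projective (cover S) := by
    apply projective_cover
    intro k
    by_cases hk : k = n + 1
    · exact Projective.of_iso
        (singleObjXIsoOfEq (ComplexShape.down ℤ) (n + 1) (ModuleCat.of R R) k hk).symm
        (ModuleCat.projective_of_free (Module.Basis.singleton PUnit.{u+1} R))
    · exact projective_of_isZero (isZero_single_obj_X _ _ _ _ hk)
  set e₁ := singleObjXSelf (ComplexShape.down ℤ) (n + 1) (ModuleCat.of R R) with he₁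
  let φa : (ModuleCat.of R R) ⟶ (cover S).X n := ModuleCat.ofHom (LinearMap.prod 0 e₁.inv.hom)
  have hφa : ∀ k, (ComplexShape.down ℤ).Rel n k → φa ≫ (cover S).d n k = 0 := by
    intro k hk
    simp only [ComplexShape.down_Rel] at hk
    subst hk
    rw [cover_d]
    apply ModuleCat.hom_ext
    show ((LinearMap.inr R _ _).comp (LinearMap.fst R _ _)).comp
      (LinearMap.prod (0 : R →ₗ[R] _) e₁.inv.hom) = 0
    rw [LinearMap.comp_assoc, LinearMap.fst_prod, LinearMap.comp_zero]
  let u : ∀ k, S.X k ⟶ N.X k := fun k =>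
    if h : k = n + 1 then
      (singleObjXIsoOfEq (ComplexShape.down ℤ) (n + 1) (ModuleCat.of R R) k h).hom ≫
        (ModuleCat.ofHom (LinearMap.toSpanSingleton R (N.X (n + 1)) y) : (ModuleCat.of R R) ⟶ N.X (n + 1)) ≫
          (N.XIsoOfEq h).inv
    else 0
  refine ⟨cover S, hproj, mkHomFromSingle φa hφa, coverDesc S N u, ?_⟩
  apply from_single_hom_ext
  rw [HomologicalComplex.comp_f, mkHomFromSingle_f]
  ext ζ
  set r : R := e₀.hom ζ with hr
  have hζ : ζ = r • ξ := by
    have h1 : e₀.inv (e₀.hom ζ) = ζ := ConcreteCategory.congr_hom e₀.hom_inv_id ζ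
    rw [← h1]
    show e₀.inv r = r • ξ
    calc e₀.inv r = e₀.inv (r • (1 : R)) := by rw [smul_eq_mul, mul_one]
    _ = r • e₀.inv (1 : R) := map_smul _ r (1 : R)
  have lhs1 : (coverDesc S N u).f n (φa r) = u n 0 + N.d (n + 1) n (u (n + 1) (e₁.inv r)) := by
    exact coverDesc_f_apply S N u n 0 (e₁.inv r)
  have hun : u n = 0 := dif_neg (by omega)
  have hun1 : u (n + 1) (e₁.inv r) = r • y := by
    have hd : u (n + 1) = (singleObjXIsoOfEq (ComplexShape.down ℤ) (n + 1) (ModuleCat.of R R) (n + 1) rfl).hom ≫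
        (ModuleCat.ofHom (LinearMap.toSpanSingleton R (N.X (n + 1)) y) : (ModuleCat.of R R) ⟶ N.X (n + 1)) ≫
          (N.XIsoOfEq rfl).inv := dif_pos rfl
    rw [hd]
    have h2 : (singleObjXIsoOfEq (ComplexShape.down ℤ) (n + 1) (ModuleCat.of R R) (n + 1) rfl).hom (e₁.inv r)
        = r := ConcreteCategory.congr_hom e₁.inv_hom_id r
    show (N.XIsoOfEq rfl).inv ((LinearMap.toSpanSingleton R (N.X (n + 1)) y)
      ((singleObjXIsoOfEq (ComplexShape.down ℤ) (n + 1) (ModuleCat.of R R) (n + 1) rfl).hom (e₁.inv r))) = r • y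
    rw [h2, HomologicalComplex.XIsoOfEq_rfl]
    show (LinearMap.toSpanSingleton R (N.X (n + 1)) y) r = r • y
    rw [LinearMap.toSpanSingleton_apply]
  show (coverDesc S N u).f n (φa (e₀.hom ζ)) = ff.f n ζ
  rw [← hr, lhs1, hun, hun1, map_smul, hy, hζ, map_smul]
  show (0 : ↥(N.X n)) + r • x = r • x
  rw [zero_add]

end SubprojAux


/-- a chain complex `N` is exact iff `N` lies in the subprojectivity domain
of the sphere complex `R[n]` for every integer `n`. -/
theorem exact_iff_subprojDomain_spheres
    {R : Type u} [Ring R] (N : ChainComplex (ModuleCat.{u} R) ℤ) :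
    (∀ i : ℤ, N.ExactAt i) ↔
      ∀ n : ℤ, SubprojDomain
        ((HomologicalComplex.single (ModuleCat.{u} R) (ComplexShape.down ℤ) n).obj
          (ModuleCat.of R R)) N := by
  constructor
  · intro hN n f
    exact SubprojAux.forward N hN n f
  · intro h i
    exact SubprojAux.backward N (fun n f => h n f) i
end
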